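/- arXiv:1008.0213 — 6 statements merged into one kernel-verified Lean document; each statement's English description precedes it below -/
import Mathlib

section
/- Let j ≥ 1, let U be a set of variables among x₁,…,xₙ, and let e₁,…,e_m be equations over 𝔽₂ such that the sets var(e_i) ∖ U are pairwise disjoint and each of size exactly j. Let e be an equation with var(e) ≠ ∅, |var(e) ∖ U| ≤ j, and var(e) ≠ var(e_i) for every i. Then the indicator vector of var(e) in 𝔽₂ⁿ does not lie in the 𝔽₂-linear span of the indicator vectors of var(e₁),…,var(e_m); consequently, neither e nor its negation can be expressed as a sum modulo 2 of one or more of the equations e₁,…,e_m. -/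
lemma stmt2_key (n j m : ℕ) (hj : 1 ≤ j) (U : Finset (Fin n))
    (V : Fin m → Finset (Fin n))
    (hcard : ∀ i, (V i \ U).card = j)
    (hdisj : ∀ i i' : Fin m, i ≠ i' → Disjoint (V i \ U) (V i' \ U))
    (E : Finset (Fin n)) (hEcard : (E \ U).card ≤ j)
    (hEne : ∀ i, E ≠ V i) (T : Finset (Fin m)) (hT : T.Nonempty) :
    (∑ i ∈ T, fun p : Fin n => if p ∈ V i then (1 : ZMod 2) else 0) ≠
        fun p : Fin n => if p ∈ E then (1 : ZMod 2) else 0 := by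
  intro h
  have hpt : ∀ p, ((T.filter (fun i => p ∈ V i)).card : ZMod 2)
      = (if p ∈ E then 1 else 0) := by
    intro p
    have := congrFun h p
    simp only [Finset.sum_apply] at this
    rw [← this, Finset.sum_boole]
  have hle1 : ∀ p : Fin n, p ∉ U → (T.filter (fun i => p ∈ V i)).card ≤ 1 := by
    intro p hp
    rw [Finset.card_le_one]
    intro a ha b hb
    simp only [Finset.mem_filter] at ha hb
    by_contra hab
    exact Finset.disjoint_left.mp (hdisj a b hab)
      (Finset.mem_sdiff.mpr ⟨ha.2, hp⟩) (Finset.mem_sdiff.mpr ⟨hb.2, hp⟩)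
  have hmem : ∀ p : Fin n, p ∉ U → (p ∈ E ↔ ∃ i ∈ T, p ∈ V i) := by
    intro p hp
    have h1 := hpt p
    have h2 := hle1 p hp
    constructor
    · intro hpE
      rw [if_pos hpE] at h1
      have : (T.filter (fun i => p ∈ V i)).Nonempty := by
        rw [Finset.nonempty_iff_ne_empty]
        intro hemp
        rw [hemp] at h1; simp at h1
      obtain ⟨i, hi⟩ := this
      simp only [Finset.mem_filter] at hi
      exact ⟨i, hi.1, hi.2⟩
    · intro ⟨i, hiT, hiV⟩
      have hne : (T.filter (fun i => p ∈ V i)).Nonempty := ⟨i, by simp [hiT, hiV]⟩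
      have hc1 : (T.filter (fun i => p ∈ V i)).card = 1 :=
        le_antisymm h2 (Finset.card_pos.mpr hne)
      rw [hc1] at h1
      by_contra hpE
      rw [if_neg hpE] at h1
      exact one_ne_zero h1
  have hunion : E \ U = T.biUnion (fun i => V i \ U) := by
    ext p
    simp only [Finset.mem_sdiff, Finset.mem_biUnion]
    constructor
    · rintro ⟨hpE, hp⟩
      obtain ⟨i, hiT, hiV⟩ := (hmem p hp).mp hpE
      exact ⟨i, hiT, hiV, hp⟩
    · rintro ⟨i, hiT, hiV, hp⟩
      exact ⟨(hmem p hp).mpr ⟨i, hiT, hiV⟩, hp⟩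
  have hcardU : (E \ U).card = T.card * j := by
    rw [hunion, Finset.card_biUnion (fun a ha b hb hab => hdisj a b hab)]
    simp [hcard, Finset.sum_const, Nat.smul_one_eq_cast]
  have hTle : T.card ≤ 1 := by
    have : T.card * j ≤ 1 * j := by rw [one_mul]; omega
    exact Nat.le_of_mul_le_mul_right this (by omega)
  have hT1 : T.card = 1 := le_antisymm hTle (Finset.card_pos.mpr hT)
  obtain ⟨i, hi⟩ := Finset.card_eq_one.mp hT1
  apply hEne i
  ext p
  have := hpt p
  rw [hi] at this
  simp only [Finset.filter_singleton] at this
  by_cases hpV : p ∈ V i <;> by_cases hpE : p ∈ E <;>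
    simp_all

/-- If the residual variable sets `V i \ U` are pairwise disjoint of size
exactly `j`, and `E` is a nonempty variable set with `|E \ U| ≤ j` distinct from every
`V i`, then the indicator vector of `E` is not in the `𝔽₂`-span of the indicator vectors
of the `V i`; consequently no nonempty subset of the equations sums (mod 2) to `E`'s
variable set, so neither the equation on `E` nor its negation is such a sum. -/
theorem stmt_2 (n j m : ℕ) (hj : 1 ≤ j) (U : Finset (Fin n))
    (V : Fin m → Finset (Fin n))
    (hcard : ∀ i, (V i \ U).card = j)
    (hdisj : ∀ i i' : Fin m, i ≠ i' → Disjoint (V i \ U) (V i' \ U))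
    (E : Finset (Fin n)) (hE : E.Nonempty) (hEcard : (E \ U).card ≤ j)
    (hEne : ∀ i, E ≠ V i) :
    ((fun p : Fin n => if p ∈ E then (1 : ZMod 2) else 0) ∉
      Submodule.span (ZMod 2)
        (Set.range fun i : Fin m => fun p : Fin n => if p ∈ V i then (1 : ZMod 2) else 0)) ∧
    ∀ T : Finset (Fin m), T.Nonempty →
      (∑ i ∈ T, fun p : Fin n => if p ∈ V i then (1 : ZMod 2) else 0) ≠
        fun p : Fin n => if p ∈ E then (1 : ZMod 2) else 0 := by
  have key := stmt2_key n j m hj U V hcard hdisj E hEcard hEne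
  refine ⟨?_, key⟩
  intro hspan
  rw [Submodule.mem_span_range_iff_exists_fun] at hspan
  obtain ⟨c, hc⟩ := hspan
  set T := Finset.univ.filter (fun i => c i = 1) with hTdef
  have hsum : (∑ i ∈ T, fun p : Fin n => if p ∈ V i then (1 : ZMod 2) else 0)
      = fun p : Fin n => if p ∈ E then (1 : ZMod 2) else 0 := by
    rw [← hc, hTdef, Finset.sum_filter]
    apply Finset.sum_congr rfl
    intro i _
    have : c i = 0 ∨ c i = 1 := by
      have h01 : ∀ x : ZMod 2, x = 0 ∨ x = 1 := by decide
      exact h01 (c i)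
    rcases this with h | h <;> simp [h]
  rcases Finset.eq_empty_or_nonempty T with hemp | hne
  · rw [hemp] at hsum
    obtain ⟨p, hp⟩ := hE
    have := congrFun hsum p
    simp [hp] at this
  · exact key T hne hsum
end

section
/- Let F be a weighted system of linear equations over 𝔽₂ on variables x₁,…,xₙ with positive integer weights and total weight W, and let S ⊆ F be a subsystem whose equations are simultaneously satisfiable and such that, for every equation e ∈ F ∖ S, the indicator vector of var(e) does not lie in the 𝔽₂-linear span of the indicator vectors {var(e') : e' ∈ S}. Then there exists an assignment x ∈ 𝔽₂ⁿ whose weight is at least W/2 + w(S)/2, where w(S) denotes the total weight of the equations in S. -/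
open Finset

private lemma zmod2_cases : ∀ a c : ZMod 2, a = c ∨ a = c + 1 := by decide
private lemma zmod2_ne : ∀ c : ZMod 2, c ≠ c + 1 := by decide

private lemma zmod2_ite_pair (a c : ZMod 2) :
    ((if a = c then (1:ℚ) else 0) + (if a = c + 1 then (1:ℚ) else 0)) = 1 := by
  rcases zmod2_cases a c with h | h
  · rw [h, if_pos rfl, if_neg (zmod2_ne c)]; norm_num
  · rw [h, if_neg fun hh => (zmod2_ne c) hh.symm, if_pos rfl]; norm_num

private lemma zmod2_addiff : ∀ a b c : ZMod 2, (a + b = c ↔ b = c + a) := by decide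

set_option maxHeartbeats 1000000 in
/-- If `S` is a simultaneously satisfiable subsystem of a weighted
`𝔽₂`-linear system `F` and every equation outside `S` has its indicator vector outside
the `𝔽₂`-span of the indicator vectors of `S`, then some assignment has weight at least
`W/2 + w(S)/2`. -/
theorem stmt_4 (n : ℕ) (ι : Type) [Fintype ι] [DecidableEq ι]
    (vars : ι → Finset (Fin n)) (rhs : ι → ZMod 2) (w : ι → ℕ)
    (hw : ∀ e, 0 < w e)
    (S : Finset ι)
    (hsat : ∃ x : Fin n → ZMod 2, ∀ e ∈ S, (∑ i ∈ vars e, x i) = rhs e)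
    (hspan : ∀ e, e ∉ S →
      (fun p : Fin n => if p ∈ vars e then (1 : ZMod 2) else 0) ∉
        Submodule.span (ZMod 2)
          ((fun e' : ι => fun p : Fin n => if p ∈ vars e' then (1 : ZMod 2) else 0) '' ↑S)) :
    ∃ x : Fin n → ZMod 2,
      (∑ e, (w e : ℚ)) / 2 + (∑ e ∈ S, (w e : ℚ)) / 2 ≤
        ∑ e, (if (∑ i ∈ vars e, x i) = rhs e then (w e : ℚ) else 0) := by
  classical
  obtain ⟨x₀, hx₀⟩ := hsat
  -- the linear functional of each equation
  set φ : ι → ((Fin n → ZMod 2) →ₗ[ZMod 2] ZMod 2) :=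
    fun e => ∑ i ∈ vars e, LinearMap.proj i with hφdef
  have hφ : ∀ e (x : Fin n → ZMod 2), φ e x = ∑ i ∈ vars e, x i := by
    intro e x
    simp [hφdef, LinearMap.sum_apply, LinearMap.proj_apply]
  -- the indicator vectors
  set ind : ι → (Fin n → ZMod 2) := fun e => fun p => if p ∈ vars e then (1 : ZMod 2) else 0
    with hind
  -- the dot-product pairing
  set D : (Fin n → ZMod 2) →ₗ[ZMod 2] ((Fin n → ZMod 2) →ₗ[ZMod 2] ZMod 2) :=
    LinearMap.mk₂ (ZMod 2) (fun v x => ∑ p, v p * x p)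
      (by intro v v' x; simp [Pi.add_apply, add_mul, Finset.sum_add_distrib])
      (by intro c v x; simp [Pi.smul_apply, smul_eq_mul, Finset.mul_sum, mul_assoc])
      (by intro v x x'; simp [Pi.add_apply, mul_add, Finset.sum_add_distrib])
      (by
        intro c v x
        simp only [Pi.smul_apply, smul_eq_mul, Finset.mul_sum]
        exact Finset.sum_congr rfl fun p _ => by ring) with hD
  have hDind : ∀ e, D (ind e) = φ e := by
    intro e
    ext x
    simp [hD, LinearMap.mk₂_apply, hind, hφ, ite_mul, Finset.sum_ite_mem, Finset.univ_inter]
  have hDinj : Function.Injective D := by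
    intro v v' h
    funext p
    have := congrArg (fun f => f (Pi.single p 1)) h
    simpa [hD, LinearMap.mk₂_apply, Pi.single_apply, mul_ite, Finset.sum_ite_eq'] using this
  -- the kernel of the subsystem S
  set K : Submodule (ZMod 2) (Fin n → ZMod 2) := ⨅ e ∈ S, LinearMap.ker (φ e) with hK
  have hmemK : ∀ z : Fin n → ZMod 2, z ∈ K ↔ ∀ e ∈ S, φ e z = 0 := by
    intro z; simp [hK]
  -- every equation outside S is nonconstant on K
  have hkey : ∀ e ∉ S, ∃ z ∈ K, φ e z = 1 := by
    intro e he
    by_contra h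
    push_neg at h
    have hle : K ≤ LinearMap.ker (φ e) := by
      intro z hz
      have h1 := h z hz
      have h2 : ∀ a : ZMod 2, a ≠ 1 → a = 0 := by decide
      simpa [LinearMap.mem_ker] using h2 _ h1
    have hKeq : (⨅ i : {x // x ∈ S}, LinearMap.ker (φ i)) ≤ LinearMap.ker (φ e) := by
      refine le_trans ?_ hle
      intro z hz
      rw [hmemK]
      intro e' he'
      exact LinearMap.mem_ker.mp (Submodule.mem_iInf _ |>.mp hz ⟨e', he'⟩)
    have hmem : φ e ∈ Submodule.span (ZMod 2) (Set.range fun i : {x // x ∈ S} => φ i) :=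
      mem_span_of_iInf_ker_le_ker hKeq
    have hrange : (Set.range fun i : {x // x ∈ S} => φ i) = φ '' ↑S := by
      ext f; constructor
      · rintro ⟨⟨i, hi⟩, rfl⟩; exact ⟨i, hi, rfl⟩
      · rintro ⟨i, hi, rfl⟩; exact ⟨⟨i, hi⟩, rfl⟩
    rw [hrange] at hmem
    have himg : φ '' ↑S = D '' (ind '' ↑S) := by
      rw [Set.image_image]
      exact Set.image_congr fun i _ => (hDind i).symm
    rw [himg, ← Submodule.map_span] at hmem
    obtain ⟨y, hy, hDy⟩ := Submodule.mem_map.mp hmem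
    rw [← hDind e] at hDy
    rw [hDinj hDy] at hy
    exact hspan e he hy
  -- counting
  haveI : Fintype K := Fintype.ofFinite K
  -- half-counting lemma for e ∉ S
  have hcount : ∀ e ∉ S, ∀ c : ZMod 2,
      (∑ z : K, (if φ e (z : Fin n → ZMod 2) = c then (1:ℚ) else 0)) * 2
        = (Fintype.card K : ℚ) := by
    intro e he c
    obtain ⟨z₀, hz₀K, hz₀⟩ := hkey e he
    have hswap : (∑ z : K, (if φ e (z : Fin n → ZMod 2) = c + 1 then (1:ℚ) else 0))
        = ∑ z : K, (if φ e (z : Fin n → ZMod 2) = c then (1:ℚ) else 0) := by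
      rw [← Equiv.sum_comp (Equiv.addRight (⟨z₀, hz₀K⟩ : K))]
      refine Finset.sum_congr rfl fun z _ => ?_
      have h1 : φ e (((Equiv.addRight (⟨z₀, hz₀K⟩ : K)) z : K) : Fin n → ZMod 2)
          = φ e (z : Fin n → ZMod 2) + 1 := by
        simp only [Equiv.coe_addRight, Submodule.coe_add]
        rw [map_add, hz₀]
      rw [h1]
      simp only [add_left_inj]
    calc (∑ z : K, (if φ e (z : Fin n → ZMod 2) = c then (1:ℚ) else 0)) * 2
        = (∑ z : K, (if φ e (z : Fin n → ZMod 2) = c then (1:ℚ) else 0))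
          + (∑ z : K, (if φ e (z : Fin n → ZMod 2) = c + 1 then (1:ℚ) else 0)) := by
          rw [hswap]; ring
      _ = ∑ z : K, (1:ℚ) := by
          rw [← Finset.sum_add_distrib]
          exact Finset.sum_congr rfl fun z _ => zmod2_ite_pair _ _
      _ = (Fintype.card K : ℚ) := by simp
  -- the average of the weight over the coset x₀ + K
  have havg : ((∑ e, (w e : ℚ)) / 2 + (∑ e ∈ S, (w e : ℚ)) / 2) * (Fintype.card K : ℚ)
      ≤ ∑ z : K, ∑ e, (if (∑ i ∈ vars e, (x₀ + (z : Fin n → ZMod 2)) i) = rhs e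
          then (w e : ℚ) else 0) := by
    rw [Finset.sum_comm]
    have hterm : ∀ e : ι,
        (∑ z : K, (if (∑ i ∈ vars e, (x₀ + (z : Fin n → ZMod 2)) i) = rhs e
          then (w e : ℚ) else 0))
        = (if e ∈ S then (Fintype.card K : ℚ) else (Fintype.card K : ℚ) / 2) * w e := by
      intro e
      have hsum : ∀ z : K, (∑ i ∈ vars e, (x₀ + (z : Fin n → ZMod 2)) i)
          = φ e x₀ + φ e (z : Fin n → ZMod 2) := by
        intro z
        rw [← hφ, map_add]
      by_cases he : e ∈ S
      · simp only [he, if_true]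
        have : ∀ z : K, (∑ i ∈ vars e, (x₀ + (z : Fin n → ZMod 2)) i) = rhs e := by
          intro z
          rw [hsum z, (hmemK z).mp z.2 e he, add_zero, hφ]
          exact hx₀ e he
        rw [Finset.sum_congr rfl fun z _ => if_pos (this z)]
        rw [Finset.sum_const, Finset.card_univ, nsmul_eq_mul]
      · simp only [he, if_false]
        have heq : ∀ z : K, ((∑ i ∈ vars e, (x₀ + (z : Fin n → ZMod 2)) i) = rhs e)
            ↔ φ e (z : Fin n → ZMod 2) = rhs e + φ e x₀ := by
          intro z
          rw [hsum z]
          exact zmod2_addiff _ _ _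
        have := hcount e he (rhs e + φ e x₀)
        have hrw : (∑ z : K, (if (∑ i ∈ vars e, (x₀ + (z : Fin n → ZMod 2)) i) = rhs e
            then (w e : ℚ) else 0))
            = (∑ z : K, (if φ e (z : Fin n → ZMod 2) = rhs e + φ e x₀ then (1:ℚ) else 0)) * w e := by
          rw [Finset.sum_mul]
          refine Finset.sum_congr rfl fun z _ => ?_
          rw [if_congr (heq z) rfl rfl]
          split <;> simp
        rw [hrw]
        have h2 : (∑ z : K, (if φ e (z : Fin n → ZMod 2) = rhs e + φ e x₀ then (1:ℚ) else 0))
            = (Fintype.card K : ℚ) / 2 := by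
          rw [eq_div_iff (by norm_num : (2:ℚ) ≠ 0)]
          exact this
        rw [h2]
    rw [Finset.sum_congr rfl fun e _ => hterm e]
    -- split over S and its complement
    rw [← Finset.sum_add_sum_compl S fun e =>
      (if e ∈ S then (Fintype.card K : ℚ) else (Fintype.card K : ℚ) / 2) * (w e : ℚ)]
    have hS : ∑ e ∈ S, (if e ∈ S then (Fintype.card K : ℚ) else (Fintype.card K : ℚ) / 2) * w e
        = (Fintype.card K : ℚ) * ∑ e ∈ S, (w e : ℚ) := by
      rw [Finset.mul_sum]
      exact Finset.sum_congr rfl fun e he => by rw [if_pos he]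
    have hSc : ∑ e ∈ Sᶜ, (if e ∈ S then (Fintype.card K : ℚ) else (Fintype.card K : ℚ) / 2) * w e
        = (Fintype.card K : ℚ) / 2 * ∑ e ∈ Sᶜ, (w e : ℚ) := by
      rw [Finset.mul_sum]
      refine Finset.sum_congr rfl fun e he => by rw [if_neg (Finset.mem_compl.mp he)]
    rw [hS, hSc]
    have htot : ∑ e ∈ Sᶜ, (w e : ℚ) = ∑ e, (w e : ℚ) - ∑ e ∈ S, (w e : ℚ) := by
      rw [eq_sub_iff_add_eq, Finset.sum_compl_add_sum]
    rw [htot]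
    ring_nf
    linarith
  -- conclude by averaging
  have hKne : (Finset.univ : Finset K).Nonempty := ⟨0, Finset.mem_univ 0⟩
  by_contra hcon
  push_neg at hcon
  have hlt : ∑ z : K, ∑ e, (if (∑ i ∈ vars e, (x₀ + (z : Fin n → ZMod 2)) i) = rhs e
      then (w e : ℚ) else 0)
      < ∑ z : K, ((∑ e, (w e : ℚ)) / 2 + (∑ e ∈ S, (w e : ℚ)) / 2) :=
    Finset.sum_lt_sum_of_nonempty hKne fun z _ => hcon _
  rw [Finset.sum_const, Finset.card_univ, nsmul_eq_mul] at hlt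
  rw [mul_comm] at havg
  linarith
end

section
/- Let c ≥ 1 and let F = {(f₁,S₁,w₁),…,(f_m,S_m,w_m)} be a Boolean CSP instance on variables x₁,…,xₙ ∈ {0,1}, where each Sᵢ is a tuple of at most c distinct variables, fᵢ : {0,1}^{|Sᵢ|} → {0,1}, and wᵢ is a positive integer. Let AVG denote the average over all 2ⁿ assignments of the weight ∑ᵢ wᵢ·fᵢ(x|_{Sᵢ}). Then there exists a weighted system F' of linear equations over 𝔽₂ on the same n variables, in which every equation involves at least one and at most c variables and carries a positive integer weight, with total weight W', such that for every assignment x ∈ {0,1}ⁿ the weight of x in F' equals W'/2 + 2^{c−1}·(weight of x in F − AVG). In particular, F has an assignment of weight at least AVG + k/2^c if and only if F' has an assignment of weight at least W'/2 + k/2. -/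
open Finset

namespace Stmt5Aux

variable {R : Type*} [CommRing R]

/-- `±1` character of a subset. -/
def chi {k : ℕ} (z : Fin k → Bool) (T : Finset (Fin k)) : R :=
  ∏ p ∈ T, (if z p then (-1 : R) else 1)

lemma chi_empty {k : ℕ} (z : Fin k → Bool) : (chi z ∅ : R) = 1 := by simp [chi]

lemma chi_cast {k : ℕ} (z : Fin k → Bool) (T : Finset (Fin k)) :
    (((chi z T : ℤ)) : ℚ) = chi z T := by
  simp [chi, apply_ite (fun (a : ℤ) => (a : ℚ))]

lemma chi_eq_pow {k : ℕ} (z : Fin k → Bool) (T : Finset (Fin k)) :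
    (chi z T : R) = (-1 : R) ^ (T.filter (fun p => z p)).card := by
  classical
  unfold chi
  rw [← Finset.prod_filter_mul_prod_filter_not T (fun p => z p)]
  rw [Finset.prod_congr rfl (fun p hp => if_pos (Finset.mem_filter.mp hp).2),
      Finset.prod_congr rfl (fun p hp => if_neg (by simpa using (Finset.mem_filter.mp hp).2))]
  simp

lemma sum_chi_mul_chi {k : ℕ} (y z : Fin k → Bool) :
    ∑ T : Finset (Fin k), (chi y T : ℚ) * chi z T = if y = z then (2:ℚ)^k else 0 := by
  classical
  have h1 : ∀ T : Finset (Fin k), (chi y T : ℚ) * chi z T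
      = ∏ p ∈ T, (if y p = z p then (1:ℚ) else -1) := by
    intro T
    rw [chi, chi, ← Finset.prod_mul_distrib]
    refine Finset.prod_congr rfl fun p _ => ?_
    cases hy : y p <;> cases hz : z p <;> simp [hy, hz]
  simp_rw [h1]
  have h2 := Fintype.prod_add (fun p : Fin k => (if y p = z p then (1:ℚ) else -1)) (fun _ => 1)
  simp only [Finset.prod_const_one, mul_one] at h2
  rw [← h2]
  by_cases hyz : y = z
  · subst hyz
    simp only [if_pos rfl]
    norm_num
  · rw [if_neg hyz]
    obtain ⟨p, hp⟩ : ∃ p, y p ≠ z p := by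
      by_contra h
      push_neg at h
      exact hyz (funext h)
    refine Finset.prod_eq_zero (Finset.mem_univ p) ?_
    rw [if_neg hp]
    ring

lemma inversion {k : ℕ} (g : (Fin k → Bool) → ℚ) (z : Fin k → Bool) :
    ∑ T : Finset (Fin k), (∑ y, g y * chi y T) * chi z T = 2^k * g z := by
  classical
  calc ∑ T : Finset (Fin k), (∑ y, g y * chi y T) * chi z T
      = ∑ y, g y * ∑ T : Finset (Fin k), (chi y T : ℚ) * chi z T := by
        simp_rw [Finset.sum_mul, Finset.mul_sum, mul_assoc]
        rw [Finset.sum_comm]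
    _ = 2^k * g z := by
        simp_rw [sum_chi_mul_chi]
        simp [mul_comm]

lemma sum_chi_eq_zero {k : ℕ} {T : Finset (Fin k)} (hT : T.Nonempty) :
    ∑ z : Fin k → Bool, (chi z T : ℚ) = 0 := by
  classical
  have h : ∀ z : Fin k → Bool,
      (chi z T : ℚ) = ∏ p, (if p ∈ T then (if z p then (-1:ℚ) else 1) else 1) := by
    intro z
    rw [Finset.prod_ite_mem, Finset.univ_inter, chi]
  simp_rw [h]
  rw [← Fintype.prod_sum (fun p (b : Bool) => if p ∈ T then (if b then (-1:ℚ) else 1) else 1)]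
  obtain ⟨p, hp⟩ := hT
  refine Finset.prod_eq_zero (Finset.mem_univ p) ?_
  rw [Fintype.sum_bool]
  simp [hp]

lemma chi_comp {n k : ℕ} (σ : Fin k → Fin n) (hσ : Function.Injective σ)
    (Y : Fin n → Bool) (T : Finset (Fin k)) :
    (chi (fun p => Y (σ p)) T : ℚ) = chi Y (T.image σ) := by
  rw [chi, chi, Finset.prod_image (fun a _ b _ h => hσ h)]

lemma pushforward {n k : ℕ} (σ : Fin k → Fin n) (hσ : Function.Injective σ)
    (g : (Fin k → Bool) → ℚ) :
    ∑ Y : Fin n → Bool, g (fun p => Y (σ p)) = 2^n / 2^k * ∑ z, g z := by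
  classical
  have key : ∀ Y : Fin n → Bool,
      g (fun p => Y (σ p)) = (2^k : ℚ)⁻¹ *
        ∑ T : Finset (Fin k), (∑ y, g y * chi y T) * chi Y (T.image σ) := by
    intro Y
    simp_rw [← chi_comp σ hσ]
    rw [inversion]
    rw [inv_mul_cancel_left₀ (by positivity)]
  simp_rw [key, ← Finset.mul_sum]
  rw [Finset.sum_comm]
  rw [Fintype.sum_eq_single (∅ : Finset (Fin k)) ?_]
  · rw [Finset.image_empty]
    simp_rw [chi_empty, mul_one]
    rw [Finset.sum_const, Finset.card_univ]
    have hcard : Fintype.card (Fin n → Bool) = 2^n := by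
      simp [Fintype.card_fun]
    rw [hcard]
    rw [nsmul_eq_mul]
    push_cast
    ring
  · intro T hT
    rw [← Finset.mul_sum, sum_chi_eq_zero, mul_zero]
    exact (Finset.image_nonempty).mpr (Finset.nonempty_iff_ne_empty.mpr hT)

lemma aux_div (D a b : ℚ) (hD : 0 < D) : b / (2*D) ≤ a ↔ b/2 ≤ D * a := by
  rw [div_le_iff₀ (by positivity), div_le_iff₀ (by norm_num : (0:ℚ) < 2)]
  constructor <;> intro h <;> nlinarith

lemma zmod_cast_eq_zero_iff (K : ℕ) : ((K : ZMod 2) = 0) ↔ Even K := by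
  rw [ZMod.natCast_eq_zero_iff]
  exact even_iff_two_dvd.symm

lemma zmod_cast_eq_one_iff (K : ℕ) : ((K : ZMod 2) = 1) ↔ ¬ Even K := by
  rw [Nat.even_iff, ← ZMod.natCast_mod]
  rcases Nat.mod_two_eq_zero_or_one K with h | h <;> rw [h] <;> simp

end Stmt5Aux


/-- Every weighted Boolean CSP of arity at most `c` reduces to a weighted
system of `𝔽₂`-linear equations on the same variables, with between 1 and `c` variables per
equation and positive integer weights, whose weight on every assignment `x` equals
`W'/2 + 2^{c-1}·(weight_F(x) − AVG)`; in particular `F` has an assignment of weight at least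
`AVG + k/2^c` iff `F'` has an assignment of weight at least `W'/2 + k/2`. -/
theorem stmt_5 (c n m : ℕ) (hc : 1 ≤ c)
    (s : Fin m → ℕ) (hs : ∀ i, s i ≤ c)
    (scope : (i : Fin m) → Fin (s i) → Fin n)
    (hscope : ∀ i, Function.Injective (scope i))
    (f : (i : Fin m) → (Fin (s i) → Bool) → Bool)
    (w : Fin m → ℕ) (hw : ∀ i, 0 < w i) :
    ∃ (m' : ℕ) (evars : Fin m' → Finset (Fin n)) (erhs : Fin m' → ZMod 2)
      (ew : Fin m' → ℕ),
      (∀ e, 1 ≤ (evars e).card ∧ (evars e).card ≤ c) ∧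
      (∀ e, 0 < ew e) ∧
      (∀ x : Fin n → Bool,
        (∑ e, if (∑ p ∈ evars e, (if x p then (1 : ZMod 2) else 0)) = erhs e
            then (ew e : ℚ) else 0) =
          (∑ e, (ew e : ℚ)) / 2 +
            2 ^ (c - 1) *
              ((∑ i, if f i (fun p => x (scope i p)) then (w i : ℚ) else 0) -
                (∑ y : Fin n → Bool,
                    ∑ i, if f i (fun p => y (scope i p)) then (w i : ℚ) else 0) / 2 ^ n)) ∧
      (∀ k : ℚ,
        (∃ x : Fin n → Bool,
          (∑ y : Fin n → Bool,
              ∑ i, if f i (fun p => y (scope i p)) then (w i : ℚ) else 0) / 2 ^ n +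
              k / 2 ^ c ≤
            ∑ i, if f i (fun p => x (scope i p)) then (w i : ℚ) else 0) ↔
        (∃ x : Fin n → Bool,
          (∑ e, (ew e : ℚ)) / 2 + k / 2 ≤
            ∑ e, if (∑ p ∈ evars e, (if x p then (1 : ZMod 2) else 0)) = erhs e
              then (ew e : ℚ) else 0)) := by
  classical
  let B : (Σ i : Fin m, Finset (Fin (s i))) → ℤ := fun t =>
    2^(c - s t.1) * (w t.1 : ℤ) *
      ∑ y : Fin (s t.1) → Bool, (if f t.1 y then Stmt5Aux.chi y t.2 else 0)
  let E : Finset (Σ i : Fin m, Finset (Fin (s i))) :=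
    Finset.univ.filter (fun t => t.2.Nonempty ∧ B t ≠ 0)
  let eqv := E.equivFin
  let elt : Fin E.card → (Σ i : Fin m, Finset (Fin (s i))) := fun e => (eqv.symm e : _)
  have heltE : ∀ e, elt e ∈ E := fun e => (eqv.symm e).2
  let evars : Fin E.card → Finset (Fin n) := fun e => (elt e).2.image (scope (elt e).1)
  let erhs : Fin E.card → ZMod 2 := fun e => if 0 < B (elt e) then 0 else 1
  let ew : Fin E.card → ℕ := fun e => (B (elt e)).natAbs
  -- transport sums over the equivalence
  have hsumE : ∀ (F : (Σ i : Fin m, Finset (Fin (s i))) → ℚ),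
      ∑ e : Fin E.card, F (elt e) = ∑ t ∈ E, F t := by
    intro F
    rw [← Finset.sum_coe_sort E F]
    exact Equiv.sum_comp eqv.symm (fun t : ↥E => F t)
  -- cast of B to ℚ
  have hBcast : ∀ t, ((B t : ℤ) : ℚ) = 2^(c - s t.1) * (w t.1 : ℚ) *
      ∑ y : Fin (s t.1) → Bool, (if f t.1 y then (Stmt5Aux.chi y t.2 : ℚ) else 0) := by
    intro t
    simp only [B]
    push_cast [apply_ite (fun (a : ℤ) => (a : ℚ)), Stmt5Aux.chi_cast]
    ring
  have hpowq : ∀ i : Fin m, ((2:ℚ))^(c - s i) = 2^c / 2^(s i) := by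
    intro i
    rw [eq_div_iff (by positivity), ← pow_add, Nat.sub_add_cancel (hs i)]
  have h2c : (2:ℚ)^c = 2 * 2^(c-1) := by
    conv_lhs => rw [show c = (c-1)+1 from (Nat.succ_pred_eq_of_pos hc).symm, pow_succ]
    ring
  -- the main identity
  have hid : ∀ x : Fin n → Bool,
      (∑ e, if (∑ p ∈ evars e, (if x p then (1 : ZMod 2) else 0)) = erhs e
            then (ew e : ℚ) else 0) =
          (∑ e, (ew e : ℚ)) / 2 +
            2 ^ (c - 1) *
              ((∑ i, if f i (fun p => x (scope i p)) then (w i : ℚ) else 0) -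
                (∑ y : Fin n → Bool,
                    ∑ i, if f i (fun p => y (scope i p)) then (w i : ℚ) else 0) / 2 ^ n) := by
    intro x
    let G : (Σ i : Fin m, Finset (Fin (s i))) → ℚ := fun t =>
      if (∑ p ∈ t.2.image (scope t.1), (if x p then (1 : ZMod 2) else 0))
          = (if 0 < B t then 0 else 1) then ((B t).natAbs : ℚ) else 0
    have hpoint : ∀ t ∈ E, G t = ((B t).natAbs : ℚ)/2 +
        ((B t : ℚ))/2 * Stmt5Aux.chi (fun p => x (scope t.1 p)) t.2 := by
      intro t ht
      obtain ⟨hne, hB0⟩ := (Finset.mem_filter.mp ht).2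
      have hzsum : (∑ p ∈ t.2.image (scope t.1), (if x p then (1:ZMod 2) else 0))
          = (((t.2.filter (fun p => x (scope t.1 p))).card : ℕ) : ZMod 2) := by
        rw [Finset.sum_boole, Finset.filter_image,
          Finset.card_image_of_injective _ (hscope t.1)]
      have hchi : (Stmt5Aux.chi (fun p => x (scope t.1 p)) t.2 : ℚ)
          = (-1)^(t.2.filter (fun p => x (scope t.1 p))).card := Stmt5Aux.chi_eq_pow _ _
      have habs : ((B t).natAbs : ℚ) = |(B t : ℚ)| := by
        rw [Nat.cast_natAbs]
        exact Int.cast_abs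
      set K := (t.2.filter (fun p => x (scope t.1 p))).card with hK
      simp only [G]
      rw [hzsum, hchi, habs]
      by_cases hB : 0 < B t
      · rw [if_pos hB]
        have habs' : |(B t : ℚ)| = (B t : ℚ) := abs_of_pos (by exact_mod_cast hB)
        rcases Nat.even_or_odd K with he | ho
        · rw [if_pos ((Stmt5Aux.zmod_cast_eq_zero_iff K).mpr he), habs', he.neg_one_pow]
          ring
        · rw [if_neg (fun hcon => (Nat.not_even_iff_odd.mpr ho)
              ((Stmt5Aux.zmod_cast_eq_zero_iff K).mp hcon)), habs', ho.neg_one_pow]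
          ring
      · rw [if_neg hB]
        have hBneg : B t < 0 := lt_of_le_of_ne (not_lt.mp hB) hB0
        have habs' : |(B t : ℚ)| = -(B t : ℚ) := abs_of_neg (by exact_mod_cast hBneg)
        rcases Nat.even_or_odd K with he | ho
        · rw [if_neg (fun hcon => (Stmt5Aux.zmod_cast_eq_one_iff K).mp hcon he),
            habs', he.neg_one_pow]
          ring
        · rw [if_pos ((Stmt5Aux.zmod_cast_eq_one_iff K).mpr (Nat.not_even_iff_odd.mpr ho)),
            habs', ho.neg_one_pow]
          ring
    have hBcast' : ∀ (i : Fin m) (T : Finset (Fin (s i))), ((B ⟨i, T⟩ : ℤ) : ℚ)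
        = 2^(c - s i) * (w i : ℚ) *
          ∑ y : Fin (s i) → Bool, (if f i y then (Stmt5Aux.chi y T : ℚ) else 0) :=
      fun i T => hBcast ⟨i, T⟩
    have hkey : ∑ t ∈ E, (B t : ℚ) * Stmt5Aux.chi (fun p => x (scope t.1 p)) t.2
        = 2^c * ((∑ i, if f i (fun p => x (scope i p)) then (w i : ℚ) else 0)
            - (∑ y : Fin n → Bool,
                ∑ i, if f i (fun p => y (scope i p)) then (w i : ℚ) else 0) / 2 ^ n) := by
      have hstep1 : ∑ t ∈ E, (B t : ℚ) * Stmt5Aux.chi (fun p => x (scope t.1 p)) t.2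
          = ∑ t ∈ Finset.univ.filter
              (fun t : (Σ i : Fin m, Finset (Fin (s i))) => t.2.Nonempty),
              (B t : ℚ) * Stmt5Aux.chi (fun p => x (scope t.1 p)) t.2 := by
        apply Finset.sum_subset
        · intro t ht
          rw [Finset.mem_filter] at *
          exact ⟨ht.1, ht.2.1⟩
        · intro t ht hnt
          have hB : B t = 0 := by
            by_contra hB
            exact hnt (Finset.mem_filter.mpr ⟨Finset.mem_univ _,
              (Finset.mem_filter.mp ht).2, hB⟩)
          rw [hB]
          push_cast
          ring
      have hi : ∀ i : Fin m, (∑ T : Finset (Fin (s i)), if T.Nonempty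
            then (B ⟨i,T⟩ : ℚ) * Stmt5Aux.chi (fun p => x (scope i p)) T else 0)
          = 2^c * (if f i (fun p => x (scope i p)) then (w i : ℚ) else 0)
            - 2^(c - s i) * ∑ y : Fin (s i) → Bool, (if f i y then (w i : ℚ) else 0) := by
        intro i
        have hsplit : ∀ T : Finset (Fin (s i)), (if T.Nonempty
              then (B ⟨i,T⟩ : ℚ) * Stmt5Aux.chi (fun p => x (scope i p)) T else 0)
            = (B ⟨i,T⟩ : ℚ) * Stmt5Aux.chi (fun p => x (scope i p)) T
              - (if T = (∅ : Finset (Fin (s i)))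
                  then (B ⟨i,(∅ : Finset (Fin (s i)))⟩ : ℚ) *
                    Stmt5Aux.chi (fun p => x (scope i p)) (∅ : Finset (Fin (s i))) else 0) := by
          intro T
          rcases eq_or_ne T ∅ with h | h
          · subst h
            simp [Finset.not_nonempty_empty]
          · rw [if_pos (Finset.nonempty_iff_ne_empty.mpr h), if_neg h, sub_zero]
        simp_rw [hsplit]
        rw [Finset.sum_sub_distrib, Finset.sum_ite_eq' Finset.univ (∅ : Finset (Fin (s i))),
          if_pos (Finset.mem_univ _)]
        have hfirst : ∑ T : Finset (Fin (s i)),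
            (B ⟨i,T⟩ : ℚ) * Stmt5Aux.chi (fun p => x (scope i p)) T
            = 2^c * (if f i (fun p => x (scope i p)) then (w i : ℚ) else 0) := by
          calc ∑ T : Finset (Fin (s i)),
              (B ⟨i,T⟩ : ℚ) * Stmt5Aux.chi (fun p => x (scope i p)) T
              = (2^(c - s i) * (w i : ℚ)) * ∑ T : Finset (Fin (s i)),
                  (∑ y, (if f i y then (1:ℚ) else 0) * Stmt5Aux.chi y T)
                    * Stmt5Aux.chi (fun p => x (scope i p)) T := by
                rw [Finset.mul_sum]
                refine Finset.sum_congr rfl fun T _ => ?_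
                rw [hBcast' i T]
                simp_rw [boole_mul]
                ring
            _ = (2^(c - s i) * (w i : ℚ)) *
                  (2^(s i) * (if f i (fun p => x (scope i p)) then (1:ℚ) else 0)) := by
                rw [Stmt5Aux.inversion (fun y => if f i y then (1:ℚ) else 0)]
            _ = (2^(c - s i) * 2^(s i)) *
                  ((w i : ℚ) * (if f i (fun p => x (scope i p)) then (1:ℚ) else 0)) := by
                ring
            _ = 2^c * (if f i (fun p => x (scope i p)) then (w i : ℚ) else 0) := by
                rw [← pow_add, Nat.sub_add_cancel (hs i), mul_ite, mul_one, mul_zero]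
        have hempty : (B ⟨i,(∅ : Finset (Fin (s i)))⟩ : ℚ) *
            Stmt5Aux.chi (fun p => x (scope i p)) (∅ : Finset (Fin (s i)))
            = 2^(c - s i) * ∑ y : Fin (s i) → Bool, (if f i y then (w i : ℚ) else 0) := by
          rw [hBcast' i ∅, Stmt5Aux.chi_empty, mul_one]
          simp_rw [Stmt5Aux.chi_empty]
          rw [mul_assoc]
          congr 1
          rw [Finset.mul_sum]
          exact Finset.sum_congr rfl fun y _ => by rw [mul_ite, mul_one, mul_zero]
        rw [hfirst, hempty]
      rw [hstep1, Finset.sum_filter, ← Finset.univ_sigma_univ, Finset.sum_sigma]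
      calc ∑ i : Fin m, ∑ T : Finset (Fin (s i)), (if T.Nonempty
              then (B ⟨i,T⟩ : ℚ) * Stmt5Aux.chi (fun p => x (scope i p)) T else 0)
          = ∑ i : Fin m, (2^c * (if f i (fun p => x (scope i p)) then (w i : ℚ) else 0)
            - 2^(c - s i) * ∑ y : Fin (s i) → Bool, (if f i y then (w i : ℚ) else 0)) :=
            Finset.sum_congr rfl fun i _ => hi i
        _ = 2^c * ((∑ i, if f i (fun p => x (scope i p)) then (w i : ℚ) else 0)
            - (∑ y : Fin n → Bool,
                ∑ i, if f i (fun p => y (scope i p)) then (w i : ℚ) else 0) / 2 ^ n) := by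
            have hAVG : (∑ y : Fin n → Bool,
                ∑ i, if f i (fun p => y (scope i p)) then (w i : ℚ) else 0)
                = ∑ i, (2^n / 2^(s i)) *
                    ∑ y : Fin (s i) → Bool, (if f i y then (w i : ℚ) else 0) := by
              rw [Finset.sum_comm]
              exact Finset.sum_congr rfl fun i _ =>
                Stmt5Aux.pushforward (scope i) (hscope i) (fun yy => if f i yy then (w i : ℚ) else 0)
            rw [Finset.sum_sub_distrib, mul_sub, ← Finset.mul_sum, hAVG]
            congr 1
            rw [Finset.sum_div, Finset.mul_sum]
            refine Finset.sum_congr rfl fun i _ => ?_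
            rw [hpowq i]
            have h2n : (2:ℚ)^n ≠ 0 := by positivity
            have h2s : (2:ℚ)^(s i) ≠ 0 := by positivity
            field_simp
    simp only [evars, erhs, ew]
    calc (∑ e, if (∑ p ∈ (elt e).2.image (scope (elt e).1), (if x p then (1 : ZMod 2) else 0))
            = (if 0 < B (elt e) then 0 else 1) then (((B (elt e)).natAbs : ℕ) : ℚ) else 0)
        = ∑ t ∈ E, G t := hsumE G
      _ = ∑ t ∈ E, (((B t).natAbs : ℚ)/2 +
            ((B t : ℚ))/2 * Stmt5Aux.chi (fun p => x (scope t.1 p)) t.2) :=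
          Finset.sum_congr rfl hpoint
      _ = (∑ t ∈ E, ((B t).natAbs : ℚ))/2 +
            (1/2) * ∑ t ∈ E, (B t : ℚ) * Stmt5Aux.chi (fun p => x (scope t.1 p)) t.2 := by
          rw [Finset.sum_add_distrib]
          congr 1
          · rw [Finset.sum_div]
          · rw [Finset.mul_sum]
            exact Finset.sum_congr rfl fun t _ => by ring
      _ = (∑ e, (((B (elt e)).natAbs : ℕ) : ℚ)) / 2 +
            2 ^ (c - 1) *
              ((∑ i, if f i (fun p => x (scope i p)) then (w i : ℚ) else 0) -
                (∑ y : Fin n → Bool,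
                    ∑ i, if f i (fun p => y (scope i p)) then (w i : ℚ) else 0) / 2 ^ n) := by
          rw [hkey, ← hsumE (fun t => ((B t).natAbs : ℚ)), h2c]
          ring
  refine ⟨E.card, evars, erhs, ew, ?_, ?_, hid, ?_⟩
  · intro e
    obtain ⟨hne, hB⟩ := (Finset.mem_filter.mp (heltE e)).2
    constructor
    · rw [Finset.card_image_of_injective _ (hscope _)]
      exact hne.card_pos
    · rw [Finset.card_image_of_injective _ (hscope _)]
      exact le_trans (le_trans (Finset.card_le_univ _) (le_of_eq (Fintype.card_fin _))) (hs _)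
  · intro e
    exact Int.natAbs_pos.mpr (Finset.mem_filter.mp (heltE e)).2.2
  · intro k
    have hD : (0:ℚ) < 2^(c-1) := by positivity
    constructor <;> rintro ⟨x, hx⟩ <;> refine ⟨x, ?_⟩
    · rw [hid x]
      have h1 : k / (2 * 2^(c-1)) ≤
          (∑ i, if f i (fun p => x (scope i p)) then (w i : ℚ) else 0) -
          (∑ y : Fin n → Bool,
              ∑ i, if f i (fun p => y (scope i p)) then (w i : ℚ) else 0) / 2 ^ n := by
        rw [← h2c]; linarith
      have h2 := (Stmt5Aux.aux_div _ _ k hD).mp h1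
      linarith
    · rw [hid x] at hx
      have h2 : k / 2 ≤ 2^(c-1) *
          ((∑ i, if f i (fun p => x (scope i p)) then (w i : ℚ) else 0) -
          (∑ y : Fin n → Bool,
              ∑ i, if f i (fun p => y (scope i p)) then (w i : ℚ) else 0) / 2 ^ n) := by
        linarith
      have h1 := (Stmt5Aux.aux_div _ _ k hD).mpr h2
      rw [← h2c] at *
      linarith
end

section
/- Let v₁, v₂, v₃ be three distinct elements and let C be a set of ordered triples, each of which is an enumeration of {v₁,v₂,v₃} (all three elements, each once). Suppose that for every i ∈ {1,2,3} there is a triple in C whose middle entry is vᵢ. Then there is an enumeration (a,b,c) of {v₁,v₂,v₃} such that either the three triples (a,b,c), (b,a,c), (a,c,b) all belong to C (an edge pattern), or the three triples (a,b,c), (b,c,a), (c,a,b) all belong to C (a cycle pattern). -/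
lemma stmt_10_aux {V : Type} {u w₁ w₂ : V} (hw : w₁ ≠ w₂) (p : V × V × V)
    (hs : ({p.1, p.2.1, p.2.2} : Set V) = {u, w₁, w₂})
    (d1 : p.1 ≠ p.2.1) (d2 : p.1 ≠ p.2.2) (d3 : p.2.1 ≠ p.2.2)
    (hm : p.2.1 = u) : p = (w₁, u, w₂) ∨ p = (w₂, u, w₁) := by
  obtain ⟨a, b, c⟩ := p
  simp only at hs d1 d2 d3 hm
  subst hm
  have ha : a ∈ ({b, w₁, w₂} : Set V) := hs ▸ (by simp : a ∈ ({a, b, c} : Set V))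
  have hc : c ∈ ({b, w₁, w₂} : Set V) := hs ▸ (by simp : c ∈ ({a, b, c} : Set V))
  simp only [Set.mem_insert_iff, Set.mem_singleton_iff] at ha hc
  rcases ha with ha | ha | ha <;> rcases hc with hc | hc | hc <;>
    simp_all [Prod.ext_iff] <;> tauto

/-- If `C` is a set of ordered triples, each enumerating the three
distinct elements `v₁, v₂, v₃`, and for each `i` some triple of `C` has middle entry `vᵢ`,
then `C` contains an edge pattern `(a,b,c), (b,a,c), (a,c,b)` or a cycle pattern
`(a,b,c), (b,c,a), (c,a,b)` on some enumeration `(a,b,c)` of `{v₁,v₂,v₃}`. -/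
theorem stmt_10 {V : Type} (v₁ v₂ v₃ : V) (h₁₂ : v₁ ≠ v₂) (h₁₃ : v₁ ≠ v₃) (h₂₃ : v₂ ≠ v₃)
    (C : Set (V × V × V))
    (hC : ∀ p ∈ C, ({p.1, p.2.1, p.2.2} : Set V) = {v₁, v₂, v₃} ∧
      p.1 ≠ p.2.1 ∧ p.1 ≠ p.2.2 ∧ p.2.1 ≠ p.2.2)
    (hmid : ∀ i ∈ ({v₁, v₂, v₃} : Set V), ∃ p ∈ C, p.2.1 = i) :
    ∃ a b c : V, ({a, b, c} : Set V) = {v₁, v₂, v₃} ∧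
      (((a, b, c) ∈ C ∧ (b, a, c) ∈ C ∧ (a, c, b) ∈ C) ∨
        ((a, b, c) ∈ C ∧ (b, c, a) ∈ C ∧ (c, a, b) ∈ C)) := by
  obtain ⟨p₁, hp₁C, hm₁⟩ := hmid v₁ (by simp)
  obtain ⟨p₂, hp₂C, hm₂⟩ := hmid v₂ (by simp)
  obtain ⟨p₃, hp₃C, hm₃⟩ := hmid v₃ (by simp)
  obtain ⟨hs₁, a₁, b₁, c₁⟩ := hC p₁ hp₁C
  obtain ⟨hs₂, a₂, b₂, c₂⟩ := hC p₂ hp₂C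
  obtain ⟨hs₃, a₃, b₃, c₃⟩ := hC p₃ hp₃C
  have e₁ := stmt_10_aux h₂₃ p₁ hs₁ a₁ b₁ c₁ hm₁
  have e₂ := stmt_10_aux h₁₃ p₂ (by rw [hs₂]; ext x; simp; try tauto) a₂ b₂ c₂ hm₂
  have e₃ := stmt_10_aux h₁₂ p₃ (by rw [hs₃]; ext x; simp; try tauto) a₃ b₃ c₃ hm₃
  rcases e₁ with e₁ | e₁ <;> rcases e₂ with e₂ | e₂ <;> rcases e₃ with e₃ | e₃ <;>
    subst e₁ <;> subst e₂ <;> subst e₃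
  · exact ⟨v₁, v₂, v₃, by ext x; simp; try tauto, Or.inl ⟨hp₂C, hp₁C, hp₃C⟩⟩
  · exact ⟨v₂, v₁, v₃, by ext x; simp; try tauto, Or.inl ⟨hp₁C, hp₂C, hp₃C⟩⟩
  · exact ⟨v₂, v₁, v₃, by ext x; simp; try tauto, Or.inr ⟨hp₁C, hp₃C, hp₂C⟩⟩
  · exact ⟨v₂, v₃, v₁, by ext x; simp; try tauto, Or.inl ⟨hp₃C, hp₂C, hp₁C⟩⟩
  · exact ⟨v₁, v₃, v₂, by ext x; simp; try tauto, Or.inl ⟨hp₃C, hp₁C, hp₂C⟩⟩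
  · exact ⟨v₁, v₂, v₃, by ext x; simp; try tauto, Or.inr ⟨hp₂C, hp₃C, hp₁C⟩⟩
  · exact ⟨v₃, v₁, v₂, by ext x; simp; try tauto, Or.inl ⟨hp₁C, hp₃C, hp₂C⟩⟩
  · exact ⟨v₃, v₂, v₁, by ext x; simp; try tauto, Or.inl ⟨hp₂C, hp₃C, hp₁C⟩⟩
end

section
/- Let (V,C) be an irreducible instance of 2-Linear Ordering with total weight W, and let k ≥ 1 be an integer. If no linear ordering φ of V has weight w(φ,C) ≥ W/2 + k/(2!·2⁴), then |V| < 10·k. Equivalently, if |V| ≥ 10k then some linear ordering φ satisfies w(φ,C) ≥ W/2 + k/32. -/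
lemma rank_equiv {V : Type} [Fintype V] [DecidableEq V] (ρ : V → ℚ)
    (hρ : Function.Injective ρ) :
    ∃ φ : V ≃ Fin (Fintype.card V), ∀ a b : V, (φ a < φ b ↔ ρ a < ρ b) := by
  classical
  set s : Finset ℚ := Finset.univ.image ρ with hs
  have hcard : s.card = Fintype.card V := by
    rw [hs, Finset.card_image_of_injective _ hρ, Finset.card_univ]
  let o := s.orderIsoOfFin hcard
  have hmem : ∀ v : V, ρ v ∈ s := fun v => Finset.mem_image_of_mem _ (Finset.mem_univ v)
  let g : V → Fin (Fintype.card V) := fun v => o.symm ⟨ρ v, hmem v⟩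
  have hginj : Function.Injective g := by
    intro a b hab
    have h2 : (⟨ρ a, hmem a⟩ : s) = ⟨ρ b, hmem b⟩ := o.symm.injective hab
    exact hρ (congrArg Subtype.val h2)
  have hbij : Function.Bijective g :=
    (Fintype.bijective_iff_injective_and_card g).2 ⟨hginj, by simp⟩
  refine ⟨Equiv.ofBijective g hbij, fun a b => ?_⟩
  show g a < g b ↔ _
  rw [← OrderIso.lt_iff_lt o, OrderIso.apply_symm_apply, OrderIso.apply_symm_apply,
    Subtype.mk_lt_mk]

lemma core_lemma {V : Type} [Fintype V] [DecidableEq V]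
    (C D : Finset (V × V)) (w : V × V → ℕ) (k : ℕ)
    (f : V → V) (d : V → ℚ)
    (hdb : ∀ v, |d v| < 1)
    (hginj : ∀ a b : V, f a = f b → d a = d b → a = b)
    (hint : ∀ e ∈ C, f e.1 = f e.2 → d e.1 < d e.2)
    (hD : D ⊆ C)
    (hDf : ∀ e ∈ D, f e.1 = f e.2)
    (hwD : (k : ℚ) / 32 ≤ (∑ e ∈ D, (w e : ℚ)) / 2) :
    ∃ φ : V ≃ Fin (Fintype.card V),
      (∑ e ∈ C, (w e : ℚ)) / 2 + (k : ℚ) / 32 ≤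
        ∑ e ∈ C.filter fun e => φ e.1 < φ e.2, (w e : ℚ) := by
  classical
  set idx : V → ℚ := fun v => ((Fintype.equivFin V v : ℕ) : ℚ) with hidx
  have idxinj : Function.Injective idx := by
    intro a b hab
    exact (Fintype.equivFin V).injective (Fin.val_injective (Nat.cast_injective hab))
  -- basic separation
  have key : ∀ a b : V, idx (f a) < idx (f b) →
      (2 * idx (f a) + d a < 2 * idx (f b) + d b) := by
    intro a b hab
    have h1 : idx (f a) + 1 ≤ idx (f b) := by
      have : (Fintype.equivFin V (f a) : ℕ) < (Fintype.equivFin V (f b) : ℕ) := by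
        by_contra hc
        push_neg at hc
        have : idx (f b) ≤ idx (f a) := by
          simp only [hidx]
          exact_mod_cast hc
        linarith
      have : (Fintype.equivFin V (f a) : ℕ) + 1 ≤ (Fintype.equivFin V (f b) : ℕ) := this
      simp only [hidx]
      exact_mod_cast this
    have h2 := abs_lt.1 (hdb a)
    have h3 := abs_lt.1 (hdb b)
    linarith
  set ρ : V → ℚ := fun v => 2 * idx (f v) + d v with hρ
  set ρ' : V → ℚ := fun v => -(2 * idx (f v)) + d v with hρ'
  have key' : ∀ a b : V, idx (f a) < idx (f b) → ρ' b < ρ' a := by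
    intro a b hab
    have h1 : idx (f a) + 1 ≤ idx (f b) := by
      have h := key a b hab
      by_contra hc
      push_neg at hc
      -- redo: reuse the nat argument
      have : (Fintype.equivFin V (f a) : ℕ) < (Fintype.equivFin V (f b) : ℕ) := by
        by_contra hc2
        push_neg at hc2
        have : idx (f b) ≤ idx (f a) := by
          simp only [hidx]; exact_mod_cast hc2
        linarith
      have : (Fintype.equivFin V (f a) : ℕ) + 1 ≤ (Fintype.equivFin V (f b) : ℕ) := this
      have : idx (f a) + 1 ≤ idx (f b) := by
        simp only [hidx]; exact_mod_cast this
      linarith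
    have h2 := abs_lt.1 (hdb a)
    have h3 := abs_lt.1 (hdb b)
    simp only [hρ']
    linarith
  have trich : ∀ a b : V, f a ≠ f b → idx (f a) < idx (f b) ∨ idx (f b) < idx (f a) := by
    intro a b hab
    rcases lt_trichotomy (idx (f a)) (idx (f b)) with h | h | h
    · exact Or.inl h
    · exact absurd (idxinj h) hab
    · exact Or.inr h
  have ρinj : Function.Injective ρ := by
    intro a b hab
    by_cases hf : f a = f b
    · refine hginj a b hf ?_
      simp only [hρ, hf] at hab
      linarith [hab]
    · rcases trich a b hf with h | h
      · exact absurd hab (ne_of_lt (key a b h))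
      · exact absurd hab.symm (ne_of_lt (key b a h))
  have ρ'inj : Function.Injective ρ' := by
    intro a b hab
    by_cases hf : f a = f b
    · refine hginj a b hf ?_
      simp only [hρ', hf] at hab
      linarith [hab]
    · rcases trich a b hf with h | h
      · exact absurd hab.symm (ne_of_lt (key' a b h))
      · exact absurd hab (ne_of_lt (key' b a h))
  obtain ⟨φ, hφ⟩ := rank_equiv ρ ρinj
  obtain ⟨φ', hφ'⟩ := rank_equiv ρ' ρ'inj
  -- both orderings satisfy all of D; each constraint satisfied by at least one
  have hpoint : ∀ e ∈ C,
      (w e : ℚ) + (if e ∈ D then (w e : ℚ) else 0) ≤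
      (if φ e.1 < φ e.2 then (w e : ℚ) else 0) +
      (if φ' e.1 < φ' e.2 then (w e : ℚ) else 0) := by
    intro e he
    by_cases hf : f e.1 = f e.2
    · have hde := hint e he hf
      have hs1 : φ e.1 < φ e.2 := (hφ e.1 e.2).2 (by simp only [hρ, hf]; linarith)
      have hs2 : φ' e.1 < φ' e.2 := (hφ' e.1 e.2).2 (by simp only [hρ', hf]; linarith)
      rw [if_pos hs1, if_pos hs2]
      by_cases hD' : e ∈ D
      · rw [if_pos hD']
      · rw [if_neg hD']
        have : (0:ℚ) ≤ (w e : ℚ) := by positivity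
        linarith
    · have hnD : e ∉ D := fun h => hf (hDf e h)
      rw [if_neg hnD]
      rcases trich e.1 e.2 hf with h | h
      · have hs1 : φ e.1 < φ e.2 := (hφ e.1 e.2).2 (key e.1 e.2 h)
        rw [if_pos hs1]
        have : (0:ℚ) ≤ (if φ' e.1 < φ' e.2 then (w e : ℚ) else 0) := by positivity
        linarith
      · have hs2 : φ' e.1 < φ' e.2 := (hφ' e.1 e.2).2 (key' e.2 e.1 h)
        rw [if_pos hs2]
        have : (0:ℚ) ≤ (if φ e.1 < φ e.2 then (w e : ℚ) else 0) := by positivity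
        linarith
  have hsum : (∑ e ∈ C, (w e : ℚ)) + (∑ e ∈ D, (w e : ℚ)) ≤
      (∑ e ∈ C.filter fun e => φ e.1 < φ e.2, (w e : ℚ)) +
      (∑ e ∈ C.filter fun e => φ' e.1 < φ' e.2, (w e : ℚ)) := by
    rw [Finset.sum_filter, Finset.sum_filter, ← Finset.sum_add_distrib]
    have hDsum : (∑ e ∈ D, (w e : ℚ)) = ∑ e ∈ C, (if e ∈ D then (w e : ℚ) else 0) := by
      rw [Finset.sum_ite_mem, Finset.inter_eq_right.mpr hD]
    rw [hDsum, ← Finset.sum_add_distrib]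
    exact Finset.sum_le_sum hpoint
  by_cases hc : (∑ e ∈ C, (w e : ℚ)) / 2 + (k : ℚ) / 32 ≤
      ∑ e ∈ C.filter fun e => φ e.1 < φ e.2, (w e : ℚ)
  · exact ⟨φ, hc⟩
  · refine ⟨φ', ?_⟩
    push_neg at hc
    linarith

/-- An irreducible instance of 2-Linear Ordering in which no linear
ordering achieves weight `W/2 + k/(2!·2⁴)` has fewer than `10k` variables. -/
theorem stmt_16 {V : Type} [Fintype V] [DecidableEq V] (k : ℕ) (hk : 1 ≤ k)
    (C : Finset (V × V)) (w : V × V → ℕ)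
    (hw : ∀ e ∈ C, 0 < w e)
    (hd : ∀ e ∈ C, e.1 ≠ e.2)
    (hocc : ∀ v : V, ∃ e ∈ C, e.1 = v ∨ e.2 = v)
    (hrev : ∀ e ∈ C, (e.2, e.1) ∉ C)
    (hno : ¬ ∃ φ : V ≃ Fin (Fintype.card V),
      (∑ e ∈ C, (w e : ℚ)) / 2 + (k : ℚ) / 32 ≤
        ∑ e ∈ C.filter fun e => φ e.1 < φ e.2, (w e : ℚ)) :
    Fintype.card V < 10 * k := by
  classical
  by_contra hbig
  push_neg at hbig
  set n := Fintype.card V with hn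
  -- maximum cardinality matching
  set isM : Finset (V × V) → Prop := fun M => ∀ e ∈ M, ∀ e' ∈ M, e ≠ e' →
      e.1 ≠ e'.1 ∧ e.1 ≠ e'.2 ∧ e.2 ≠ e'.1 ∧ e.2 ≠ e'.2 with hisM
  obtain ⟨M, hMmem, hMmax⟩ := Finset.exists_max_image
      ((C.powerset).filter fun M => isM M) Finset.card
      ⟨∅, by simp [hisM]⟩
  rw [Finset.mem_filter, Finset.mem_powerset] at hMmem
  obtain ⟨hMC, hMm⟩ := hMmem
  simp only [hisM] at hMm
  set matched : Finset V := M.image Prod.fst ∪ M.image Prod.snd with hmatched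
  have hmeme : ∀ e ∈ M, e.1 ∈ matched ∧ e.2 ∈ matched := by
    intro e he
    constructor
    · exact Finset.mem_union_left _ (Finset.mem_image_of_mem _ he)
    · exact Finset.mem_union_right _ (Finset.mem_image_of_mem _ he)
  -- maximality : every constraint has a matched endpoint
  have hedge : ∀ e ∈ C, e.1 ∈ matched ∨ e.2 ∈ matched := by
    intro e he
    by_contra hcon
    push_neg at hcon
    obtain ⟨h1, h2⟩ := hcon
    have heM : e ∉ M := fun h => h1 (hmeme e h).1
    have hins : insert e M ∈ (C.powerset).filter fun M => isM M := by
      rw [Finset.mem_filter, Finset.mem_powerset]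
      refine ⟨Finset.insert_subset he hMC, ?_⟩
      simp only [hisM]
      intro a ha b hb hab
      rw [Finset.mem_insert] at ha hb
      rcases ha with rfl | ha
      · rcases hb with rfl | hb
        · exact absurd rfl hab
        · obtain ⟨hb1, hb2⟩ := hmeme b hb
          exact ⟨fun h => h1 (h ▸ hb1), fun h => h1 (h ▸ hb2),
                 fun h => h2 (h ▸ hb1), fun h => h2 (h ▸ hb2)⟩
      · rcases hb with rfl | hb
        · obtain ⟨ha1, ha2⟩ := hmeme a ha
          exact ⟨fun h => h1 (h.symm ▸ ha1), fun h => h2 (h.symm ▸ ha1),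
                 fun h => h1 (h.symm ▸ ha2), fun h => h2 (h.symm ▸ ha2)⟩
        · exact hMm a ha b hb hab
    have hle := hMmax _ hins
    rw [Finset.card_insert_of_notMem heM] at hle
    omega
  -- counting
  set Ufin : Finset V := Finset.univ.filter (fun v => v ∉ matched) with hUfin
  have hmatchedcard : matched.card ≤ 2 * M.card := by
    calc matched.card ≤ (M.image Prod.fst).card + (M.image Prod.snd).card :=
          Finset.card_union_le _ _
      _ ≤ M.card + M.card := Nat.add_le_add (Finset.card_image_le) (Finset.card_image_le)
      _ = 2 * M.card := by ring
  have hsplitn : n ≤ Ufin.card + 2 * M.card := by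
    have h1 : (Finset.univ.filter (fun v => v ∈ matched)).card +
        (Finset.univ.filter (fun v => v ∉ matched)).card = Finset.univ.card :=
      Finset.card_filter_add_card_filter_not _
    have h2 : Finset.univ.filter (fun v : V => v ∈ matched) = matched := by
      ext v; simp
    have h2b : Ufin.card = (Finset.univ.filter (fun v => v ∉ matched)).card := by
      rw [hUfin]
    rw [h2] at h1
    have h3 : n = Finset.univ.card := (Finset.card_univ).symm
    omega
  -- index and offsets
  set idx0 : V → ℕ := fun v => (Fintype.equivFin V v : ℕ) with hidx0
  have hidx0inj : ∀ a b : V, idx0 a = idx0 b → a = b := by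
    intro a b h
    exact (Fintype.equivFin V).injective (Fin.val_injective h)
  set X : V → ℚ := fun v => ((1 + idx0 v : ℕ) : ℚ) / ((n + 2 : ℕ) : ℚ) with hX
  have hden : (0:ℚ) < ((n + 2 : ℕ) : ℚ) := by positivity
  have hXpos : ∀ v, 0 < X v := by
    intro v
    apply div_pos _ hden
    have : (0:ℕ) < 1 + idx0 v := by omega
    exact_mod_cast this
  have hXlt1 : ∀ v, X v < 1 := by
    intro v
    rw [hX]
    rw [div_lt_one hden]
    have hv : idx0 v < n := (Fintype.equivFin V v).isLt
    have : 1 + idx0 v < n + 2 := by omega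
    exact_mod_cast this
  have hXinj : ∀ a b : V, X a = X b → a = b := by
    intro a b h
    simp only [hX] at h
    rw [div_eq_div_iff hden.ne' hden.ne'] at h
    have h2 : ((1 + idx0 a : ℕ) : ℚ) = ((1 + idx0 b : ℕ) : ℚ) :=
      mul_right_cancel₀ (ne_of_gt hden) h
    have h3 : 1 + idx0 a = 1 + idx0 b := Nat.cast_injective h2
    exact hidx0inj a b (by omega)
  -- weight lower bound helper
  have hwsum : ∀ D : Finset (V × V), D ⊆ C → D.card ≤ ∑ e ∈ D, w e := by
    intro D hD
    calc D.card = ∑ _e ∈ D, 1 := by rw [Finset.sum_const, smul_eq_mul, mul_one]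
      _ ≤ ∑ e ∈ D, w e := Finset.sum_le_sum (fun e he => hw e (hD he))
  have hkD : ∀ D : Finset (V × V), D ⊆ C → n ≤ 3 * D.card →
      (k : ℚ) / 32 ≤ (∑ e ∈ D, (w e : ℚ)) / 2 := by
    intro D hD h3
    have h4 := hwsum D hD
    have h5 : k ≤ ∑ e ∈ D, w e := by omega
    have h6 : (k : ℚ) ≤ ∑ e ∈ D, (w e : ℚ) := by exact_mod_cast h5
    linarith
  by_cases hcase : M.card ≤ Ufin.card
  · -- CASE A : many unmatched vertices, use stars
    have hcov : ∀ u : V, ∃ e : V × V, u ∉ matched →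
        (e ∈ C ∧ ((e.1 = u ∧ e.2 ∈ matched) ∨ (e.2 = u ∧ e.1 ∈ matched))) := by
      intro u
      by_cases hu : u ∉ matched
      · obtain ⟨e, he, hor⟩ := hocc u
        refine ⟨e, fun _ => ⟨he, ?_⟩⟩
        rcases hor with h1 | h1
        · exact Or.inl ⟨h1, (hedge e he).resolve_left (h1 ▸ hu)⟩
        · exact Or.inr ⟨h1, (hedge e he).resolve_right (h1 ▸ hu)⟩
      · exact ⟨(u, u), fun h => absurd h hu⟩
    choose E hE using hcov
    set f : V → V := fun v => if v ∈ matched then v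
        else (if (E v).1 = v then (E v).2 else (E v).1) with hf
    set d : V → ℚ := fun v => if v ∈ matched then 0
        else (if (E v).1 = v then -1 else 1) * X v with hdd
    -- facts about f and d on unmatched vertices
    have hfd : ∀ u : V, u ∉ matched →
        (E u ∈ C) ∧ ((E u = (u, f u) ∧ f u ∈ matched ∧ d u = -X u) ∨
                     (E u = (f u, u) ∧ f u ∈ matched ∧ d u = X u)) := by
      intro u hu
      obtain ⟨he, hor⟩ := hE u hu
      refine ⟨he, ?_⟩
      rcases hor with ⟨h1, h2⟩ | ⟨h1, h2⟩
      · left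
        have hite : (E u).1 = u := h1
        have hfu : f u = (E u).2 := by rw [hf]; simp [hu, hite]
        refine ⟨Prod.ext h1 hfu.symm, hfu ▸ h2, ?_⟩
        rw [hdd]; simp [hu, hite]
      · right
        have hne : (E u).1 ≠ u := by
          intro hc
          exact hu (hc ▸ h2)
        have hfu : f u = (E u).1 := by rw [hf]; simp [hu, hne]
        refine ⟨Prod.ext hfu.symm h1, hfu ▸ h2, ?_⟩
        rw [hdd]; simp [hu, hne]
    have hfm : ∀ v ∈ matched, f v = v := by
      intro v hv; rw [hf]; simp [hv]
    have hdm : ∀ v ∈ matched, d v = 0 := by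
      intro v hv; rw [hdd]; simp [hv]
    have hfmm : ∀ v : V, f v ∈ matched → f v ≠ v → v ∉ matched := by
      intro v h1 h2
      intro hv
      exact h2 (hfm v hv)
    -- core hypotheses
    have hdb : ∀ v, |d v| < 1 := by
      intro v
      by_cases hv : v ∈ matched
      · rw [hdm v hv]; norm_num
      · rcases (hfd v hv).2 with ⟨_, _, h3⟩ | ⟨_, _, h3⟩
        · rw [h3, abs_neg, abs_of_pos (hXpos v)]; exact hXlt1 v
        · rw [h3, abs_of_pos (hXpos v)]; exact hXlt1 v
    have hginj : ∀ a b : V, f a = f b → d a = d b → a = b := by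
      intro a b h1 h2
      by_cases ha : a ∈ matched <;> by_cases hb : b ∈ matched
      · rw [hfm a ha, hfm b hb] at h1; exact h1
      · exfalso
        rw [hdm a ha] at h2
        rcases (hfd b hb).2 with ⟨_, _, h3⟩ | ⟨_, _, h3⟩ <;> rw [h3] at h2 <;>
          [linarith [hXpos b]; linarith [hXpos b]]
      · exfalso
        rw [hdm b hb] at h2
        rcases (hfd a ha).2 with ⟨_, _, h3⟩ | ⟨_, _, h3⟩ <;> rw [h3] at h2 <;>
          [linarith [hXpos a]; linarith [hXpos a]]
      · rcases (hfd a ha).2 with ⟨_, _, h3⟩ | ⟨_, _, h3⟩ <;>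
          rcases (hfd b hb).2 with ⟨_, _, h4⟩ | ⟨_, _, h4⟩ <;>
          rw [h3, h4] at h2
        · exact hXinj a b (by linarith)
        · exfalso; linarith [hXpos a, hXpos b]
        · exfalso; linarith [hXpos a, hXpos b]
        · exact hXinj a b h2
    have hint : ∀ e ∈ C, f e.1 = f e.2 → d e.1 < d e.2 := by
      intro e he hfe
      by_cases h1 : e.1 ∈ matched <;> by_cases h2 : e.2 ∈ matched
      · exfalso
        rw [hfm _ h1, hfm _ h2] at hfe
        exact hd e he hfe
      · -- e.1 matched (center), e.2 unmatched leaf with f e.2 = e.1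
        rw [hfm _ h1] at hfe
        obtain ⟨hec, hor⟩ := hfd e.2 h2
        rcases hor with ⟨h3, _, h5⟩ | ⟨h3, _, h5⟩
        · -- E e.2 = (e.2, e.1) : reverse of e is in C , contradiction
          exfalso
          rw [← hfe] at h3
          have : (e.2, e.1) ∈ C := h3 ▸ hec
          exact hrev e he this
        · rw [hdm _ h1, h5]
          exact hXpos e.2
      · -- e.1 unmatched leaf, e.2 matched center
        rw [hfm _ h2] at hfe
        obtain ⟨hec, hor⟩ := hfd e.1 h1
        rcases hor with ⟨h3, _, h5⟩ | ⟨h3, _, h5⟩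
        · rw [hdm _ h2, h5]
          have := hXpos e.1
          linarith
        · -- E e.1 = (e.2, e.1) : reverse of e in C, contradiction
          exfalso
          rw [hfe] at h3
          have : (e.2, e.1) ∈ C := h3 ▸ hec
          exact hrev e he this
      · exfalso
        rcases hedge e he with h | h
        · exact h1 h
        · exact h2 h
    set D : Finset (V × V) := Ufin.image E with hD
    have hDC : D ⊆ C := by
      intro e he
      rw [hD, Finset.mem_image] at he
      obtain ⟨u, hu, rfl⟩ := he
      rw [hUfin, Finset.mem_filter] at hu
      exact (hfd u hu.2).1
    have hDf : ∀ e ∈ D, f e.1 = f e.2 := by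
      intro e he
      rw [hD, Finset.mem_image] at he
      obtain ⟨u, hu, rfl⟩ := he
      rw [hUfin, Finset.mem_filter] at hu
      obtain ⟨_, hor⟩ := hfd u hu.2
      rcases hor with ⟨h1, h2, _⟩ | ⟨h1, h2, _⟩
      · rw [h1]
        simp only
        rw [hfm _ h2]
      · rw [h1]
        simp only
        rw [hfm _ h2]
    have hDcard : D.card = Ufin.card := by
      rw [hD]
      apply Finset.card_image_of_injOn
      intro a ha b hb hab
      rw [Finset.mem_coe, hUfin, Finset.mem_filter] at ha hb
      obtain ⟨_, hor1⟩ := hfd a ha.2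
      obtain ⟨_, hor2⟩ := hfd b hb.2
      rcases hor1 with ⟨h1, h2, _⟩ | ⟨h1, h2, _⟩ <;>
        rcases hor2 with ⟨h3, h4, _⟩ | ⟨h3, h4, _⟩ <;> rw [h1, h3] at hab
      · exact (Prod.ext_iff.mp hab).1
      · exfalso
        have h5 : f a = b := (Prod.ext_iff.mp hab).2
        exact hb.2 (h5 ▸ h2)
      · exfalso
        have h5 : a = f b := (Prod.ext_iff.mp hab).2
        exact ha.2 (h5 ▸ h4)
      · exact (Prod.ext_iff.mp hab).2
    have hn3 : n ≤ 3 * D.card := by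
      rw [hDcard]; omega
    obtain ⟨φ, hφ⟩ := core_lemma C D w k f d hdb hginj hint hDC hDf (hkD D hDC hn3)
    exact hno ⟨φ, hφ⟩
  · -- CASE B : big matching, use matched pairs
    push_neg at hcase
    have hsnd : ∀ v : V, ∃ e : V × V, (∃ e' ∈ M, e'.2 = v) → (e ∈ M ∧ e.2 = v) := by
      intro v
      by_cases h : ∃ e' ∈ M, e'.2 = v
      · obtain ⟨e', he', h2⟩ := h
        exact ⟨e', fun _ => ⟨he', h2⟩⟩
      · exact ⟨(v, v), fun hh => absurd hh h⟩
    choose E2 hE2 using hsnd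
    have huniq2 : ∀ e ∈ M, ∀ e' ∈ M, e.2 = e'.2 → e = e' := by
      intro e he e' he' h
      by_contra hne
      exact (hMm e he e' he' hne).2.2.2 h
    have huniq1 : ∀ e ∈ M, ∀ e' ∈ M, e.1 = e'.1 → e = e' := by
      intro e he e' he' h
      by_contra hne
      exact (hMm e he e' he' hne).1 h
    have hfst_not_snd : ∀ e ∈ M, ¬∃ e' ∈ M, e'.2 = e.1 := by
      intro e he hcon
      obtain ⟨e', he', h⟩ := hcon
      by_cases hee : e = e'
      · subst hee
        exact hd e (hMC he) h.symm
      · exact (hMm e' he' e he (fun hc => hee hc.symm)).2.2.1 h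
    set f : V → V := fun v => if ∃ e' ∈ M, e'.2 = v then (E2 v).1 else v with hf
    set d : V → ℚ := fun v => if ∃ e' ∈ M, e'.2 = v then X v else 0 with hdd
    have hfsnd : ∀ v : V, (∃ e' ∈ M, e'.2 = v) → f v = (E2 v).1 ∧ d v = X v := by
      intro v hv
      constructor
      · rw [hf]; simp [hv]
      · rw [hdd]; simp [hv]
    have hfnot : ∀ v : V, ¬(∃ e' ∈ M, e'.2 = v) → f v = v ∧ d v = 0 := by
      intro v hv
      constructor
      · rw [hf]; simp [hv]
      · rw [hdd]; simp [hv]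
    have hdb : ∀ v, |d v| < 1 := by
      intro v
      by_cases hv : ∃ e' ∈ M, e'.2 = v
      · rw [(hfsnd v hv).2, abs_of_pos (hXpos v)]; exact hXlt1 v
      · rw [(hfnot v hv).2]; norm_num
    have hginj : ∀ a b : V, f a = f b → d a = d b → a = b := by
      intro a b h1 h2
      by_cases ha : ∃ e' ∈ M, e'.2 = a <;> by_cases hb : ∃ e' ∈ M, e'.2 = b
      · rw [(hfsnd a ha).2, (hfsnd b hb).2] at h2
        exact hXinj a b h2
      · exfalso
        rw [(hfsnd a ha).2, (hfnot b hb).2] at h2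
        linarith [hXpos a]
      · exfalso
        rw [(hfnot a ha).2, (hfsnd b hb).2] at h2
        linarith [hXpos b]
      · rw [(hfnot a ha).1, (hfnot b hb).1] at h1; exact h1
    have hint : ∀ e ∈ C, f e.1 = f e.2 → d e.1 < d e.2 := by
      intro e he hfe
      by_cases h1 : ∃ e' ∈ M, e'.2 = e.1 <;> by_cases h2 : ∃ e' ∈ M, e'.2 = e.2
      · -- both are second endpoints : impossible
        exfalso
        obtain ⟨hm1, hm1'⟩ := hE2 e.1 h1
        obtain ⟨hm2, hm2'⟩ := hE2 e.2 h2
        rw [(hfsnd e.1 h1).1, (hfsnd e.2 h2).1] at hfe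
        have := huniq1 _ hm1 _ hm2 hfe
        rw [this] at hm1'
        rw [hm1'] at hm2'
        exact hd e he hm2'
      · -- e.1 snd, e.2 not : reverse pair in M , contradiction with hrev
        exfalso
        obtain ⟨hm1, hm1'⟩ := hE2 e.1 h1
        rw [(hfsnd e.1 h1).1, (hfnot e.2 h2).1] at hfe
        have hpair : E2 e.1 = (e.2, e.1) := by
          have := Prod.mk.eta (p := E2 e.1)
          rw [← this, hfe, hm1']
        have : (e.2, e.1) ∈ C := hpair ▸ (hMC hm1)
        exact hrev e he this
      · rw [(hfnot e.1 h1).2, (hfsnd e.2 h2).2]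
        exact hXpos e.2
      · exfalso
        rw [(hfnot e.1 h1).1, (hfnot e.2 h2).1] at hfe
        exact hd e he hfe
    have hDf : ∀ e ∈ M, f e.1 = f e.2 := by
      intro e he
      have h1 : ¬∃ e' ∈ M, e'.2 = e.1 := hfst_not_snd e he
      have h2 : ∃ e' ∈ M, e'.2 = e.2 := ⟨e, he, rfl⟩
      rw [(hfnot e.1 h1).1, (hfsnd e.2 h2).1]
      obtain ⟨hm, hm'⟩ := hE2 e.2 h2
      have := huniq2 _ hm _ he hm'
      rw [this]
    have hn3 : n ≤ 3 * M.card := by omega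
    obtain ⟨φ, hφ⟩ := core_lemma C M w k f d hdb hginj hint hMC hDf (hkD M hMC hn3)
    exact hno ⟨φ, hφ⟩
end

section
/- Let (V,C) be an instance of 3-Linear Ordering, let B be a finite linearly ordered set of buckets, and let φ_t : V → B be any bucket map. Then there exists a linear ordering φ : V → {1,…,|V|} with w(φ,C) ≥ w_t(φ_t,C). In particular, if some bucket map φ_t satisfies w_t(φ_t,C) ≥ ρ·W + k, then some linear ordering φ satisfies w(φ,C) ≥ ρ·W + k. -/
attribute [local instance] Classical.propDecidable

/-- Payoff of a binary ordering constraint `e` under a bucket map `φt : V → B`: zero unless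
`φt e.1 ≤ φt e.2`, and otherwise `1/∏_b m_b!` where `m_b` is the bucket multiplicity. -/
noncomputable def bucketPayoff2 {V B : Type} [Fintype B] [LinearOrder B]
    (φt : V → B) (e : V × V) : ℚ :=
  if φt e.1 ≤ φt e.2 then
    (∏ b : B,
      (((if φt e.1 = b then 1 else 0) + (if φt e.2 = b then 1 else 0) : ℕ).factorial : ℚ))⁻¹
  else 0

/-- Payoff of a ternary ordering constraint `e` under a bucket map `φt : V → B`: zero unless
`φt e.1 ≤ φt e.2.1 ≤ φt e.2.2`, and otherwise `1/∏_b m_b!`. -/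
noncomputable def bucketPayoff3 {V B : Type} [Fintype B] [LinearOrder B]
    (φt : V → B) (e : V × V × V) : ℚ :=
  if φt e.1 ≤ φt e.2.1 ∧ φt e.2.1 ≤ φt e.2.2 then
    (∏ b : B,
      (((if φt e.1 = b then 1 else 0) + (if φt e.2.1 = b then 1 else 0) +
          (if φt e.2.2 = b then 1 else 0) : ℕ).factorial : ℚ))⁻¹
  else 0

/-- The weight of a linear ordering `φ` on a 3-Linear Ordering instance: total weight of the
binary and ternary constraints it satisfies. -/
noncomputable def ordWeight {V : Type} [Fintype V]
    (C₂ : Finset (V × V)) (C₃ : Finset (V × V × V))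
    (w₂ : V × V → ℕ) (w₃ : V × V × V → ℕ) (φ : V ≃ Fin (Fintype.card V)) : ℚ :=
  (∑ e ∈ C₂.filter fun e => φ e.1 < φ e.2, (w₂ e : ℚ)) +
    ∑ e ∈ C₃.filter (fun e => φ e.1 < φ e.2.1 ∧ φ e.2.1 < φ e.2.2), (w₃ e : ℚ)

open Finset

section helpers
variable {V : Type} [Fintype V] [DecidableEq V]

noncomputable def keyEquiv {K : Type} [LinearOrder K] (g : V → K)
    (hg : Function.Injective g) : V ≃ Fin (Fintype.card V) :=
  Equiv.ofBijective
    (fun v => ((Finset.univ.image g).orderIsoOfFin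
        (by rw [Finset.card_image_of_injective _ hg, Finset.card_univ])).symm
        ⟨g v, Finset.mem_image_of_mem g (Finset.mem_univ v)⟩)
    (by
      refine (Fintype.bijective_iff_injective_and_card _).2 ⟨?_, by simp⟩
      intro v u h
      apply hg
      have h2 := congrArg ((Finset.univ.image g).orderIsoOfFin
        (by rw [Finset.card_image_of_injective _ hg, Finset.card_univ])) h
      simp only [OrderIso.apply_symm_apply] at h2
      exact congrArg Subtype.val h2)

omit [DecidableEq V] in
lemma keyEquiv_lt_iff {K : Type} [LinearOrder K] (g : V → K)
    (hg : Function.Injective g) (v u : V) :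
    keyEquiv g hg v < keyEquiv g hg u ↔ g v < g u := by
  rw [keyEquiv]
  simp only [Equiv.ofBijective_apply]
  rw [OrderIso.lt_iff_lt]
  exact Subtype.mk_lt_mk

end helpers

section counting
variable {V : Type} [Fintype V] [DecidableEq V]

lemma card_filter_comp (π : Equiv.Perm V) (P : (V ≃ Fin (Fintype.card V)) → Prop)
    [DecidablePred P] [DecidablePred fun τ : V ≃ Fin (Fintype.card V) => P (π.trans τ)] :
    (Finset.univ.filter fun τ : V ≃ Fin (Fintype.card V) => P (π.trans τ)).card
      = (Finset.univ.filter P).card := by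
  refine Finset.card_bij' (fun τ _ => π.trans τ) (fun τ _ => π.symm.trans τ) ?_ ?_ ?_ ?_
  · intro τ h; simp only [Finset.mem_filter, Finset.mem_univ, true_and] at h ⊢; exact h
  · intro τ h; simp only [Finset.mem_filter, Finset.mem_univ, true_and] at h ⊢
    have e : π.trans (π.symm.trans τ) = τ := by ext v; simp
    rwa [e]
  · intro τ _; ext v; simp
  · intro τ _; ext v; simp

lemma count_pair (v1 v2 : V) (h : v1 ≠ v2) :
    (Finset.univ.filter fun τ : V ≃ Fin (Fintype.card V) => τ v1 < τ v2).card * 2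
      = (Finset.univ : Finset (V ≃ Fin (Fintype.card V))).card := by
  have hB : (Finset.univ.filter fun τ : V ≃ Fin (Fintype.card V) => τ v2 < τ v1).card
      = (Finset.univ.filter fun τ : V ≃ Fin (Fintype.card V) => τ v1 < τ v2).card := by
    rw [← card_filter_comp (Equiv.swap v1 v2) (fun τ => τ v1 < τ v2)]
    congr 1
    apply Finset.filter_congr
    intro τ _
    simp [Equiv.trans_apply, Equiv.swap_apply_left, Equiv.swap_apply_right]
  have := Finset.card_filter_add_card_filter_not
    (s := (Finset.univ : Finset (V ≃ Fin (Fintype.card V))))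
    (fun τ : V ≃ Fin (Fintype.card V) => τ v1 < τ v2)
  have hneg : (Finset.univ.filter fun τ : V ≃ Fin (Fintype.card V) => ¬ τ v1 < τ v2)
      = (Finset.univ.filter fun τ : V ≃ Fin (Fintype.card V) => τ v2 < τ v1) := by
    apply Finset.filter_congr
    intro τ _
    constructor
    · intro hn
      rcases lt_or_eq_of_le (not_lt.1 hn) with h'|h'
      · exact h'
      · exact absurd (τ.injective h') h.symm
    · exact fun h' => not_lt.2 h'.le
  rw [hneg] at this
  omega

lemma six_sum (a b c : ℕ) (hab : a ≠ b) (hac : a ≠ c) (hbc : b ≠ c) :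
    ((if a < b ∧ b < c then 1 else 0) + (if a < c ∧ c < b then 1 else 0)
      + (if b < a ∧ a < c then 1 else 0) + (if b < c ∧ c < a then 1 else 0)
      + (if c < a ∧ a < b then 1 else 0) + (if c < b ∧ b < a then 1 else 0) : ℕ) = 1 := by
  split_ifs <;> omega

lemma count_triple (v1 v2 v3 : V) (h12 : v1 ≠ v2) (h13 : v1 ≠ v3) (h23 : v2 ≠ v3) :
    (Finset.univ.filter fun τ : V ≃ Fin (Fintype.card V) => τ v1 < τ v2 ∧ τ v2 < τ v3).card * 6
      = (Finset.univ : Finset (V ≃ Fin (Fintype.card V))).card := by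
  have key : ∀ (x y z : V),
      (∃ π : Equiv.Perm V, π v1 = x ∧ π v2 = y ∧ π v3 = z) →
      (Finset.univ.filter fun τ : V ≃ Fin (Fintype.card V) => τ x < τ y ∧ τ y < τ z).card
        = (Finset.univ.filter fun τ : V ≃ Fin (Fintype.card V)
            => τ v1 < τ v2 ∧ τ v2 < τ v3).card := by
    rintro x y z ⟨π, hx, hy, hz⟩
    rw [← card_filter_comp π (fun τ => τ v1 < τ v2 ∧ τ v2 < τ v3)]
    congr 1
    apply Finset.filter_congr
    intro τ _
    simp [Equiv.trans_apply, hx, hy, hz]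
  have c2 := key v1 v3 v2 ⟨Equiv.swap v2 v3, by
    refine ⟨?_, ?_, ?_⟩ <;> simp [Equiv.swap_apply_def, h12, h13, h23, h12.symm, h13.symm, h23.symm]⟩
  have c3 := key v2 v1 v3 ⟨Equiv.swap v1 v2, by
    refine ⟨?_, ?_, ?_⟩ <;> simp [Equiv.swap_apply_def, h12, h13, h23, h12.symm, h13.symm, h23.symm]⟩
  have c4 := key v2 v3 v1 ⟨(Equiv.swap v1 v2).trans (Equiv.swap v1 v3), by
    refine ⟨?_, ?_, ?_⟩ <;>
      simp [Equiv.trans_apply, Equiv.swap_apply_def, h12, h13, h23, h12.symm, h13.symm, h23.symm]⟩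
  have c5 := key v3 v1 v2 ⟨(Equiv.swap v1 v3).trans (Equiv.swap v1 v2), by
    refine ⟨?_, ?_, ?_⟩ <;>
      simp [Equiv.trans_apply, Equiv.swap_apply_def, h12, h13, h23, h12.symm, h13.symm, h23.symm]⟩
  have c6 := key v3 v2 v1 ⟨Equiv.swap v1 v3, by
    refine ⟨?_, ?_, ?_⟩ <;> simp [Equiv.swap_apply_def, h12, h13, h23, h12.symm, h13.symm, h23.symm]⟩
  have total : (Finset.univ : Finset (V ≃ Fin (Fintype.card V))).card
      = (Finset.univ.filter fun τ : V ≃ Fin (Fintype.card V) => τ v1 < τ v2 ∧ τ v2 < τ v3).card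
      + (Finset.univ.filter fun τ : V ≃ Fin (Fintype.card V) => τ v1 < τ v3 ∧ τ v3 < τ v2).card
      + (Finset.univ.filter fun τ : V ≃ Fin (Fintype.card V) => τ v2 < τ v1 ∧ τ v1 < τ v3).card
      + (Finset.univ.filter fun τ : V ≃ Fin (Fintype.card V) => τ v2 < τ v3 ∧ τ v3 < τ v1).card
      + (Finset.univ.filter fun τ : V ≃ Fin (Fintype.card V) => τ v3 < τ v1 ∧ τ v1 < τ v2).card
      + (Finset.univ.filter fun τ : V ≃ Fin (Fintype.card V) => τ v3 < τ v2 ∧ τ v2 < τ v1).card := by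
    simp only [Finset.card_filter]
    rw [← Finset.sum_add_distrib, ← Finset.sum_add_distrib, ← Finset.sum_add_distrib,
      ← Finset.sum_add_distrib, ← Finset.sum_add_distrib,
      ← Finset.card_univ, Finset.card_eq_sum_ones]
    apply Finset.sum_congr rfl
    intro τ _
    have e12 : ((τ v1 : Fin (Fintype.card V)) : ℕ) ≠ ((τ v2 : Fin (Fintype.card V)) : ℕ) :=
      fun h => h12 (τ.injective (Fin.val_injective h))
    have e13 : ((τ v1 : Fin (Fintype.card V)) : ℕ) ≠ ((τ v3 : Fin (Fintype.card V)) : ℕ) :=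
      fun h => h13 (τ.injective (Fin.val_injective h))
    have e23 : ((τ v2 : Fin (Fintype.card V)) : ℕ) ≠ ((τ v3 : Fin (Fintype.card V)) : ℕ) :=
      fun h => h23 (τ.injective (Fin.val_injective h))
    have h6 := six_sum _ _ _ e12 e13 e23
    rw [eq_comm]
    simpa only [Fin.lt_def] using h6
  omega

end counting

section bigphi
variable {V B : Type} [Fintype V] [DecidableEq V] [Fintype B] [LinearOrder B]

noncomputable def bigPhi (φt : V → B) (τ : V ≃ Fin (Fintype.card V)) :
    V ≃ Fin (Fintype.card V) :=
  keyEquiv (fun v => toLex (φt v, τ v))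
    (show Function.Injective (fun v => toLex (φt v, τ v)) from
      fun v u h => τ.injective (congrArg (fun p => (ofLex p).2) h))

lemma bigPhi_lt (φt : V → B) (τ : V ≃ Fin (Fintype.card V)) (v u : V) :
    bigPhi φt τ v < bigPhi φt τ u ↔ φt v < φt u ∨ (φt v = φt u ∧ τ v < τ u) := by
  rw [bigPhi, keyEquiv_lt_iff]
  exact Prod.Lex.lt_iff

lemma pair_bound (φt : V → B) (x y : V) (hxy : x ≠ y) (w : ℚ) (hw : 0 ≤ w) :
    w * bucketPayoff2 φt (x, y) * ((Finset.univ : Finset (V ≃ Fin (Fintype.card V))).card : ℚ)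
      ≤ ∑ τ : V ≃ Fin (Fintype.card V), if (bigPhi φt τ) x < (bigPhi φt τ) y then w else 0 := by
  rcases lt_trichotomy (φt x) (φt y) with h | h | h
  · have hprod : (∏ b : B,
        (((if φt x = b then 1 else 0) + (if φt y = b then 1 else 0) : ℕ).factorial : ℚ)) = 1 := by
      refine Finset.prod_eq_one fun b _ => ?_
      split_ifs with h1 h2 h2 <;> first
        | (exact absurd (h1.trans h2.symm) h.ne) | norm_num [Nat.factorial]
    have hsat : ∀ τ : V ≃ Fin (Fintype.card V), (bigPhi φt τ) x < (bigPhi φt τ) y := by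
      intro τ; rw [bigPhi_lt]; exact Or.inl h
    have : (∑ τ : V ≃ Fin (Fintype.card V), if (bigPhi φt τ) x < (bigPhi φt τ) y then w else 0)
        = ((Finset.univ : Finset (V ≃ Fin (Fintype.card V))).card : ℚ) * w := by
      rw [Finset.sum_congr rfl fun τ _ => if_pos (hsat τ), Finset.sum_const, nsmul_eq_mul]
    rw [this, bucketPayoff2]
    simp only [if_pos h.le, hprod]
    ring_nf
    exact le_refl _
  · have hprod : (∏ b : B,
        (((if φt x = b then 1 else 0) + (if φt y = b then 1 else 0) : ℕ).factorial : ℚ)) = 2 := by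
      have : ∀ b : B, (((if φt x = b then 1 else 0) + (if φt y = b then 1 else 0) : ℕ).factorial : ℚ)
          = if φt x = b then 2 else 1 := by
        intro b; rw [← h]; split_ifs <;> norm_num [Nat.factorial]
      rw [Finset.prod_congr rfl fun b _ => this b, Finset.prod_ite_eq, if_pos (Finset.mem_univ _)]
    have hsat : ∀ τ : V ≃ Fin (Fintype.card V),
        ((bigPhi φt τ) x < (bigPhi φt τ) y ↔ τ x < τ y) := by
      intro τ; rw [bigPhi_lt]
      simp [h, lt_irrefl]
    have hsum : (∑ τ : V ≃ Fin (Fintype.card V), if (bigPhi φt τ) x < (bigPhi φt τ) y then w else 0)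
        = ((Finset.univ.filter fun τ : V ≃ Fin (Fintype.card V) => τ x < τ y).card : ℚ) * w := by
      rw [Finset.sum_congr rfl fun τ _ => if_congr (hsat τ) rfl rfl, ← Finset.sum_filter,
        Finset.sum_const, nsmul_eq_mul]
    rw [hsum, bucketPayoff2]
    simp only [if_pos h.le, hprod]
    have hc : ((Finset.univ.filter fun τ : V ≃ Fin (Fintype.card V) => τ x < τ y).card : ℚ) * 2
        = ((Finset.univ : Finset (V ≃ Fin (Fintype.card V))).card : ℚ) := by
      exact_mod_cast congrArg (Nat.cast : ℕ → ℚ) (count_pair x y hxy)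
    rw [← hc]
    apply le_of_eq
    ring
  · rw [bucketPayoff2, if_neg (not_le.2 h)]
    rw [mul_zero, zero_mul]
    apply Finset.sum_nonneg
    intro τ _
    split_ifs <;> simp [hw]

end bigphi

section triple
variable {V B : Type} [Fintype V] [DecidableEq V] [Fintype B] [LinearOrder B]

lemma triple_bound (φt : V → B) (x y z : V) (hxy : x ≠ y) (hxz : x ≠ z) (hyz : y ≠ z)
    (w : ℚ) (hw : 0 ≤ w) :
    w * bucketPayoff3 φt (x, y, z) * ((Finset.univ : Finset (V ≃ Fin (Fintype.card V))).card : ℚ)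
      ≤ ∑ τ : V ≃ Fin (Fintype.card V),
          if (bigPhi φt τ) x < (bigPhi φt τ) y ∧ (bigPhi φt τ) y < (bigPhi φt τ) z
          then w else 0 := by
  by_cases hle : φt x ≤ φt y ∧ φt y ≤ φt z
  swap
  · rw [bucketPayoff3, if_neg hle, mul_zero, zero_mul]
    apply Finset.sum_nonneg
    intro τ _
    split_ifs <;> simp [hw]
  obtain ⟨h1, h2⟩ := hle
  rcases lt_or_eq_of_le h1 with h1 | h1 <;> rcases lt_or_eq_of_le h2 with h2 | h2
  · -- φt x < φt y < φt z
    have hprod : (∏ b : B,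
        (((if φt x = b then 1 else 0) + (if φt y = b then 1 else 0)
          + (if φt z = b then 1 else 0) : ℕ).factorial : ℚ)) = 1 := by
      refine Finset.prod_eq_one fun b _ => ?_
      have nxy := h1.ne
      have nyz := h2.ne
      have nxz := (h1.trans h2).ne
      split_ifs <;> simp_all [Nat.factorial]
    have hsat : ∀ τ : V ≃ Fin (Fintype.card V),
        (bigPhi φt τ) x < (bigPhi φt τ) y ∧ (bigPhi φt τ) y < (bigPhi φt τ) z := by
      intro τ
      exact ⟨(bigPhi_lt φt τ x y).2 (Or.inl h1), (bigPhi_lt φt τ y z).2 (Or.inl h2)⟩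
    have hsum : (∑ τ : V ≃ Fin (Fintype.card V),
        if (bigPhi φt τ) x < (bigPhi φt τ) y ∧ (bigPhi φt τ) y < (bigPhi φt τ) z then w else 0)
        = ((Finset.univ : Finset (V ≃ Fin (Fintype.card V))).card : ℚ) * w := by
      rw [Finset.sum_congr rfl fun τ _ => if_pos (hsat τ), Finset.sum_const, nsmul_eq_mul]
    rw [hsum, bucketPayoff3, if_pos ⟨h1.le, h2.le⟩]
    simp only [hprod]
    apply le_of_eq; ring
  · -- φt x < φt y = φt z
    have nxy := h1.ne
    have nxz : φt x ≠ φt z := h2 ▸ h1.ne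
    have hprod : (∏ b : B,
        (((if φt x = b then 1 else 0) + (if φt y = b then 1 else 0)
          + (if φt z = b then 1 else 0) : ℕ).factorial : ℚ)) = 2 := by
      have hfac : ∀ b : B, (((if φt x = b then 1 else 0) + (if φt y = b then 1 else 0)
          + (if φt z = b then 1 else 0) : ℕ).factorial : ℚ) = if φt y = b then 2 else 1 := by
        intro b
        rw [← h2]
        split_ifs <;> simp_all [Nat.factorial]
      rw [Finset.prod_congr rfl fun b _ => hfac b, Finset.prod_ite_eq,
        if_pos (Finset.mem_univ _)]
    have hsat : ∀ τ : V ≃ Fin (Fintype.card V),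
        ((bigPhi φt τ) x < (bigPhi φt τ) y ∧ (bigPhi φt τ) y < (bigPhi φt τ) z ↔ τ y < τ z) := by
      intro τ
      rw [bigPhi_lt, bigPhi_lt]
      have h3 : φt x < φt z := h2 ▸ h1
      simp [h1, h2, h3, lt_irrefl]
    have hsum : (∑ τ : V ≃ Fin (Fintype.card V),
        if (bigPhi φt τ) x < (bigPhi φt τ) y ∧ (bigPhi φt τ) y < (bigPhi φt τ) z then w else 0)
        = ((Finset.univ.filter fun τ : V ≃ Fin (Fintype.card V) => τ y < τ z).card : ℚ) * w := by
      rw [Finset.sum_congr rfl fun τ _ => if_congr (hsat τ) rfl rfl, ← Finset.sum_filter,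
        Finset.sum_const, nsmul_eq_mul]
    rw [hsum, bucketPayoff3, if_pos ⟨h1.le, h2.le⟩]
    simp only [hprod]
    have hc : ((Finset.univ.filter fun τ : V ≃ Fin (Fintype.card V) => τ y < τ z).card : ℚ) * 2
        = ((Finset.univ : Finset (V ≃ Fin (Fintype.card V))).card : ℚ) := by
      exact_mod_cast congrArg (Nat.cast : ℕ → ℚ) (count_pair y z hyz)
    rw [← hc]
    apply le_of_eq; ring
  · -- φt x = φt y < φt z
    have nyz := h2.ne
    have nxz : φt x ≠ φt z := h1 ▸ h2.ne
    have hprod : (∏ b : B,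
        (((if φt x = b then 1 else 0) + (if φt y = b then 1 else 0)
          + (if φt z = b then 1 else 0) : ℕ).factorial : ℚ)) = 2 := by
      have hfac : ∀ b : B, (((if φt x = b then 1 else 0) + (if φt y = b then 1 else 0)
          + (if φt z = b then 1 else 0) : ℕ).factorial : ℚ) = if φt x = b then 2 else 1 := by
        intro b
        rw [← h1]
        split_ifs <;> simp_all [Nat.factorial]
      rw [Finset.prod_congr rfl fun b _ => hfac b, Finset.prod_ite_eq,
        if_pos (Finset.mem_univ _)]
    have hsat : ∀ τ : V ≃ Fin (Fintype.card V),
        ((bigPhi φt τ) x < (bigPhi φt τ) y ∧ (bigPhi φt τ) y < (bigPhi φt τ) z ↔ τ x < τ y) := by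
      intro τ
      rw [bigPhi_lt, bigPhi_lt]
      have h3 : φt x < φt z := h1 ▸ h2
      simp [h1, h2, h3, lt_irrefl]
    have hsum : (∑ τ : V ≃ Fin (Fintype.card V),
        if (bigPhi φt τ) x < (bigPhi φt τ) y ∧ (bigPhi φt τ) y < (bigPhi φt τ) z then w else 0)
        = ((Finset.univ.filter fun τ : V ≃ Fin (Fintype.card V) => τ x < τ y).card : ℚ) * w := by
      rw [Finset.sum_congr rfl fun τ _ => if_congr (hsat τ) rfl rfl, ← Finset.sum_filter,
        Finset.sum_const, nsmul_eq_mul]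
    rw [hsum, bucketPayoff3, if_pos ⟨h1.le, h2.le⟩]
    simp only [hprod]
    have hc : ((Finset.univ.filter fun τ : V ≃ Fin (Fintype.card V) => τ x < τ y).card : ℚ) * 2
        = ((Finset.univ : Finset (V ≃ Fin (Fintype.card V))).card : ℚ) := by
      exact_mod_cast congrArg (Nat.cast : ℕ → ℚ) (count_pair x y hxy)
    rw [← hc]
    apply le_of_eq; ring
  · -- φt x = φt y = φt z
    have hprod : (∏ b : B,
        (((if φt x = b then 1 else 0) + (if φt y = b then 1 else 0)
          + (if φt z = b then 1 else 0) : ℕ).factorial : ℚ)) = 6 := by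
      have hfac : ∀ b : B, (((if φt x = b then 1 else 0) + (if φt y = b then 1 else 0)
          + (if φt z = b then 1 else 0) : ℕ).factorial : ℚ) = if φt x = b then 6 else 1 := by
        intro b
        rw [← h1, ← h1.trans h2]
        split_ifs <;> norm_num [Nat.factorial]
      rw [Finset.prod_congr rfl fun b _ => hfac b, Finset.prod_ite_eq,
        if_pos (Finset.mem_univ _)]
    have hsat : ∀ τ : V ≃ Fin (Fintype.card V),
        ((bigPhi φt τ) x < (bigPhi φt τ) y ∧ (bigPhi φt τ) y < (bigPhi φt τ) z
          ↔ τ x < τ y ∧ τ y < τ z) := by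
      intro τ
      rw [bigPhi_lt, bigPhi_lt]
      simp [h1, h2, lt_irrefl]
    have hsum : (∑ τ : V ≃ Fin (Fintype.card V),
        if (bigPhi φt τ) x < (bigPhi φt τ) y ∧ (bigPhi φt τ) y < (bigPhi φt τ) z then w else 0)
        = ((Finset.univ.filter fun τ : V ≃ Fin (Fintype.card V)
            => τ x < τ y ∧ τ y < τ z).card : ℚ) * w := by
      rw [Finset.sum_congr rfl fun τ _ => if_congr (hsat τ) rfl rfl, ← Finset.sum_filter,
        Finset.sum_const, nsmul_eq_mul]
    rw [hsum, bucketPayoff3, if_pos ⟨h1.le, h2.le⟩]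
    simp only [hprod]
    have hc : ((Finset.univ.filter fun τ : V ≃ Fin (Fintype.card V)
          => τ x < τ y ∧ τ y < τ z).card : ℚ) * 6
        = ((Finset.univ : Finset (V ≃ Fin (Fintype.card V))).card : ℚ) := by
      exact_mod_cast congrArg (Nat.cast : ℕ → ℚ) (count_triple x y z hxy hxz hyz)
    rw [← hc]
    apply le_of_eq; ring

end triple

/-- For every bucket map `φt : V → B` into a finite linear order there is
a linear ordering `φ` of `V` whose weight is at least the bucket weight `w_t(φt, C)`; in
particular, if some bucket map has bucket weight at least `ρ·W + k` then some linear
ordering has weight at least `ρ·W + k`. -/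
theorem stmt_17 {V B : Type} [Fintype V] [DecidableEq V] [Fintype B] [LinearOrder B]
    (C₂ : Finset (V × V)) (C₃ : Finset (V × V × V))
    (w₂ : V × V → ℕ) (w₃ : V × V × V → ℕ)
    (hw₂ : ∀ e ∈ C₂, 0 < w₂ e) (hw₃ : ∀ e ∈ C₃, 0 < w₃ e)
    (hd₂ : ∀ e ∈ C₂, e.1 ≠ e.2)
    (hd₃ : ∀ e ∈ C₃, e.1 ≠ e.2.1 ∧ e.1 ≠ e.2.2 ∧ e.2.1 ≠ e.2.2)
    (φt : V → B) :
    (∃ φ : V ≃ Fin (Fintype.card V),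
      (∑ e ∈ C₂, (w₂ e : ℚ) * bucketPayoff2 φt e) +
          (∑ e ∈ C₃, (w₃ e : ℚ) * bucketPayoff3 φt e) ≤
        ordWeight C₂ C₃ w₂ w₃ φ) ∧
    (∀ k : ℚ,
      (∑ e ∈ C₂, (w₂ e : ℚ)) / 2 + (∑ e ∈ C₃, (w₃ e : ℚ)) / 6 + k ≤
          (∑ e ∈ C₂, (w₂ e : ℚ) * bucketPayoff2 φt e) +
            (∑ e ∈ C₃, (w₃ e : ℚ) * bucketPayoff3 φt e) →
        ∃ φ : V ≃ Fin (Fintype.card V),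
          (∑ e ∈ C₂, (w₂ e : ℚ)) / 2 + (∑ e ∈ C₃, (w₃ e : ℚ)) / 6 + k ≤
            ordWeight C₂ C₃ w₂ w₃ φ) := by
  have main : ∃ φ : V ≃ Fin (Fintype.card V),
      (∑ e ∈ C₂, (w₂ e : ℚ) * bucketPayoff2 φt e) +
          (∑ e ∈ C₃, (w₃ e : ℚ) * bucketPayoff3 φt e) ≤
        ordWeight C₂ C₃ w₂ w₃ φ := by
    have hne : (Finset.univ : Finset (V ≃ Fin (Fintype.card V))).Nonempty :=
      ⟨Fintype.equivFin V, Finset.mem_univ _⟩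
    set N : ℚ := ((Finset.univ : Finset (V ≃ Fin (Fintype.card V))).card : ℚ) with hN
    have h2 : (∑ e ∈ C₂, (w₂ e : ℚ) * bucketPayoff2 φt e) * N
        ≤ ∑ e ∈ C₂, ∑ τ : V ≃ Fin (Fintype.card V),
            (if (bigPhi φt τ) e.1 < (bigPhi φt τ) e.2 then (w₂ e : ℚ) else 0) := by
      rw [Finset.sum_mul]
      refine Finset.sum_le_sum fun e he => ?_
      exact pair_bound φt e.1 e.2 (hd₂ e he) (w₂ e) (by positivity)
    have h3 : (∑ e ∈ C₃, (w₃ e : ℚ) * bucketPayoff3 φt e) * N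
        ≤ ∑ e ∈ C₃, ∑ τ : V ≃ Fin (Fintype.card V),
            (if (bigPhi φt τ) e.1 < (bigPhi φt τ) e.2.1
              ∧ (bigPhi φt τ) e.2.1 < (bigPhi φt τ) e.2.2 then (w₃ e : ℚ) else 0) := by
      rw [Finset.sum_mul]
      refine Finset.sum_le_sum fun e he => ?_
      exact triple_bound φt e.1 e.2.1 e.2.2 (hd₃ e he).1 (hd₃ e he).2.1 (hd₃ e he).2.2
        (w₃ e) (by positivity)
    have expand : ∀ τ : V ≃ Fin (Fintype.card V), ordWeight C₂ C₃ w₂ w₃ (bigPhi φt τ)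
        = (∑ e ∈ C₂, if (bigPhi φt τ) e.1 < (bigPhi φt τ) e.2 then (w₂ e : ℚ) else 0)
          + ∑ e ∈ C₃, if (bigPhi φt τ) e.1 < (bigPhi φt τ) e.2.1
              ∧ (bigPhi φt τ) e.2.1 < (bigPhi φt τ) e.2.2 then (w₃ e : ℚ) else 0 := by
      intro τ
      rw [ordWeight, Finset.sum_filter, Finset.sum_filter]
    have hkey : ∑ τ : V ≃ Fin (Fintype.card V),
        ((∑ e ∈ C₂, (w₂ e : ℚ) * bucketPayoff2 φt e) +
          (∑ e ∈ C₃, (w₃ e : ℚ) * bucketPayoff3 φt e))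
        ≤ ∑ τ : V ≃ Fin (Fintype.card V), ordWeight C₂ C₃ w₂ w₃ (bigPhi φt τ) := by
      rw [Finset.sum_const, nsmul_eq_mul, mul_comm]
      calc ((∑ e ∈ C₂, (w₂ e : ℚ) * bucketPayoff2 φt e) +
            (∑ e ∈ C₃, (w₃ e : ℚ) * bucketPayoff3 φt e)) * N
          ≤ (∑ e ∈ C₂, ∑ τ : V ≃ Fin (Fintype.card V),
              (if (bigPhi φt τ) e.1 < (bigPhi φt τ) e.2 then (w₂ e : ℚ) else 0))
            + ∑ e ∈ C₃, ∑ τ : V ≃ Fin (Fintype.card V),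
              (if (bigPhi φt τ) e.1 < (bigPhi φt τ) e.2.1
                ∧ (bigPhi φt τ) e.2.1 < (bigPhi φt τ) e.2.2 then (w₃ e : ℚ) else 0) := by
            rw [add_mul]; exact add_le_add h2 h3
        _ = ∑ τ : V ≃ Fin (Fintype.card V), ordWeight C₂ C₃ w₂ w₃ (bigPhi φt τ) := by
            rw [Finset.sum_comm, Finset.sum_comm (s := C₃), ← Finset.sum_add_distrib]
            exact Finset.sum_congr rfl fun τ _ => (expand τ).symm
    obtain ⟨τ, _, hτ⟩ := Finset.exists_le_of_sum_le hne hkey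
    exact ⟨bigPhi φt τ, hτ⟩
  refine ⟨main, fun k hk => ?_⟩
  obtain ⟨φ, hφ⟩ := main
  exact ⟨φ, le_trans hk hφ⟩
end
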